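/- arXiv:0903.3055 — 3 statements merged into one kernel-verified Lean document; each statement's English description precedes it below -/
import Mathlib

section
/- Let (X, ρ) be a locally compact metric space that is an ANR and satisfies the Disjoint Arcs Property. If X × ℝ, equipped with the sum metric, has the Disjoint Disks Property, then X satisfies the Disjoint Path Concordances Property. -/
open unitInterval Topology

noncomputable section

/-- The sum metric on a product of (pseudo)metric spaces:
`ρ̃((x,s),(y,t)) = ρ(x,y) + |s − t|`. -/
def sumDist {X Y : Type*} [PseudoMetricSpace X] [PseudoMetricSpace Y] (a b : X × Y) : ℝ :=
  dist a.1 b.1 + dist a.2 b.2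

/-- `X` is an ANR: for every metric space `Z` and every closed topological embedding
`j : X → Z`, there is an open set `U` with `j(X) ⊆ U ⊆ Z` and a continuous retraction
of `U` onto `j(X)`. -/
def IsANR (X : Type u) [MetricSpace X] : Prop :=
  ∀ (Z : Type u) [MetricSpace Z] (j : X → Z), Topology.IsClosedEmbedding j →
    ∃ U : Set Z, IsOpen U ∧ Set.range j ⊆ U ∧
      ∃ r : C(U, Z), (∀ u : U, r u ∈ Set.range j) ∧
        (∀ u : U, (u : Z) ∈ Set.range j → r u = (u : Z))

/-- The Disjoint Arcs Property: any two paths in `X` can be approximated,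
arbitrarily closely, by paths with disjoint images. -/
def DAP (X : Type*) [MetricSpace X] : Prop :=
  ∀ (f₁ f₂ : C(I, X)) (ε : ℝ), 0 < ε →
    ∃ g₁ g₂ : C(I, X),
      (∀ s, dist (f₁ s) (g₁ s) < ε) ∧ (∀ s, dist (f₂ s) (g₂ s) < ε) ∧
      Set.range g₁ ∩ Set.range g₂ = ∅

/-- A path concordance in `X`: a map `F : D × I → X × I` with
`F(D × {e}) ⊆ X × {e}` for `e ∈ {0,1}`. -/
def IsPathConcordance {X : Type*} [TopologicalSpace X] (F : C(I × I, X × I)) : Prop :=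
  ∀ d : I, (F (d, 0)).2 = 0 ∧ (F (d, 1)).2 = 1

/-- The Disjoint Path Concordances Property (DCP): any two path homotopies
`f₁, f₂ : D × I → X` admit disjoint path concordances `F₁, F₂ : D × I → X × I`
whose `X`-coordinates approximate `f₁, f₂` arbitrarily closely. -/
def DCP (X : Type*) [MetricSpace X] : Prop :=
  ∀ (f₁ f₂ : C(I × I, X)) (ε : ℝ), 0 < ε →
    ∃ F₁ F₂ : C(I × I, X × I),
      IsPathConcordance F₁ ∧ IsPathConcordance F₂ ∧
      Set.range F₁ ∩ Set.range F₂ = ∅ ∧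
      (∀ p, dist (f₁ p) (F₁ p).1 < ε) ∧ (∀ p, dist (f₂ p) (F₂ p).1 < ε)

/-- The Disjoint Disks Property for `X × ℝ`, equipped with the sum metric:
any two maps of the disk `[0,1]²` into `X × ℝ` can be approximated, arbitrarily
closely in the sum metric, by maps with disjoint images. -/
def DDPsum (X : Type*) [MetricSpace X] : Prop :=
  ∀ (f₁ f₂ : C(I × I, X × ℝ)) (ε : ℝ), 0 < ε →
    ∃ g₁ g₂ : C(I × I, X × ℝ),
      (∀ p, sumDist (f₁ p) (g₁ p) < ε) ∧ (∀ p, sumDist (f₂ p) (g₂ p) < ε) ∧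
      Set.range g₁ ∩ Set.range g₂ = ∅


namespace DCPwork

open Set Metric

variable {X : Type u} [MetricSpace X]

def kur [Nonempty X] (x : X) : BoundedContinuousFunction X ℝ :=
  BoundedContinuousFunction.mkOfBound
    ⟨fun y => dist x y - dist (Classical.arbitrary X) y, by fun_prop⟩
    (2 * dist x (Classical.arbitrary X)) (by
      intro a b
      simp only [ContinuousMap.coe_mk, Real.dist_eq]
      have h1 : |dist x a - dist (Classical.arbitrary X) a| ≤ dist x (Classical.arbitrary X) :=
        abs_dist_sub_le _ _ _
      have h2 : |dist x b - dist (Classical.arbitrary X) b| ≤ dist x (Classical.arbitrary X) :=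
        abs_dist_sub_le _ _ _
      calc |dist x a - dist (Classical.arbitrary X) a - (dist x b - dist (Classical.arbitrary X) b)|
          ≤ |dist x a - dist (Classical.arbitrary X) a| + |dist x b - dist (Classical.arbitrary X) b| := abs_sub _ _
        _ ≤ _ := by linarith)

lemma kur_apply [Nonempty X] (x y : X) :
    kur x y = dist x y - dist (Classical.arbitrary X) y := rfl

lemma kur_isometry [Nonempty X] : Isometry (kur (X := X)) := by
  refine Isometry.of_dist_eq fun x x' => le_antisymm ?_ ?_
  · refine (BoundedContinuousFunction.dist_le dist_nonneg).2 fun y => ?_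
    rw [Real.dist_eq, kur_apply, kur_apply]
    have : dist x y - dist (Classical.arbitrary X) y - (dist x' y - dist (Classical.arbitrary X) y)
        = dist x y - dist x' y := by ring
    rw [this]
    exact abs_dist_sub_le _ _ _
  · have h := BoundedContinuousFunction.dist_coe_le_dist (f := kur x) (g := kur x') x'
    rw [Real.dist_eq, kur_apply, kur_apply, dist_self] at h
    have : |dist x x' - dist (Classical.arbitrary X) x' - (0 - dist (Classical.arbitrary X) x')|
        = dist x x' := by rw [abs_of_nonneg] <;> simp [dist_nonneg]
    linarith [le_abs_self (dist x x' - dist (Classical.arbitrary X) x' - (0 - dist (Classical.arbitrary X) x')), this ▸ h]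

lemma closed_residue [Nonempty X] [LocallyCompactSpace X] :
    IsClosed (closure (Set.range (kur (X := X))) \ Set.range (kur (X := X))) := by
  set S := Set.range (kur (X := X)) with hS
  refine isClosed_of_closure_subset ?_
  intro x hx
  have hxC : x ∈ closure S :=
    closure_minimal (diff_subset) isClosed_closure hx
  refine ⟨hxC, ?_⟩
  rintro ⟨x₀, rfl⟩
  obtain ⟨K, hK, hKn⟩ := exists_compact_mem_nhds x₀
  obtain ⟨r, hr, hball⟩ := Metric.mem_nhds_iff.1 hKn
  have hOS : Metric.ball (kur x₀) r ∩ S ⊆ kur '' K := by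
    rintro y ⟨hy, z, rfl⟩
    refine ⟨z, hball ?_, rfl⟩
    rwa [Metric.mem_ball, kur_isometry.dist_eq] at hy
  have hOC : Metric.ball (kur x₀) r ∩ closure S ⊆ S := by
    intro y hy
    have h1 : y ∈ closure (Metric.ball (kur x₀) r ∩ S) :=
      Metric.isOpen_ball.inter_closure hy
    have h2 : closure (Metric.ball (kur x₀) r ∩ S) ⊆ kur '' K :=
      closure_minimal hOS (hK.image kur_isometry.continuous).isClosed
    exact image_subset_range _ _ (h2 h1)
  obtain ⟨y, hy1, hy2⟩ := (mem_closure_iff.1 hx _ Metric.isOpen_ball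
    (Metric.mem_ball_self hr))
  exact hy2.2 (hOC ⟨hy1, hy2.1⟩)


lemma exists_retraction [Nonempty X] [LocallyCompactSpace X] (hANR : IsANR X) :
    ∃ (W : Set (BoundedContinuousFunction X ℝ)) (ρ : C(W, BoundedContinuousFunction X ℝ)),
      IsOpen W ∧ Set.range (kur (X := X)) ⊆ W ∧
      (∀ w : W, ρ w ∈ Set.range (kur (X := X))) ∧
      (∀ w : W, (w : BoundedContinuousFunction X ℝ) ∈ Set.range (kur (X := X)) → ρ w = w) := by
  classical
  set S := Set.range (kur (X := X)) with hSdef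
  set V : Set (BoundedContinuousFunction X ℝ) := (closure S \ S)ᶜ with hVdef
  have hVopen : IsOpen V := closed_residue.isOpen_compl
  have hSV : S ⊆ V := fun s hs => by simp [hVdef, hs]
  have hmemV : ∀ x : X, kur x ∈ V := fun x => hSV (mem_range_self x)
  set j' : X → V := fun x => ⟨kur x, hmemV x⟩ with hj'def
  have hj'iso : Isometry j' := Isometry.of_dist_eq fun a b => by
    rw [Subtype.dist_eq]; exact kur_isometry.dist_eq a b
  have hrangeSet : Set.range j' = Subtype.val ⁻¹' closure S := by
    ext w
    constructor
    · rintro ⟨x, rfl⟩; exact subset_closure (mem_range_self x)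
    · intro hw
      have : (w : BoundedContinuousFunction X ℝ) ∈ S := by
        by_contra hns
        exact w.2 ⟨hw, hns⟩
      obtain ⟨x, hx⟩ := this
      exact ⟨x, Subtype.ext hx⟩
  have hce : Topology.IsClosedEmbedding j' :=
    ⟨hj'iso.isEmbedding, hrangeSet ▸ isClosed_closure.preimage continuous_subtype_val⟩
  obtain ⟨U, hUopen, hUrange, rr, hr1, hr2⟩ := hANR V j' hce
  set W : Set (BoundedContinuousFunction X ℝ) := Subtype.val '' U with hWdef
  have hWV : ∀ w : W, (w : BoundedContinuousFunction X ℝ) ∈ V := by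
    rintro ⟨w, u, hu, he⟩; exact he ▸ u.2
  have hWU : ∀ w : W, (⟨(w : BoundedContinuousFunction X ℝ), hWV w⟩ : V) ∈ U := by
    rintro ⟨w, u, hu, he⟩
    have heq : (⟨w, hWV ⟨w, u, hu, he⟩⟩ : V) = u := Subtype.ext he.symm
    rw [heq]; exact hu
  set m : W → U := fun w => ⟨⟨(w : BoundedContinuousFunction X ℝ), hWV w⟩, hWU w⟩ with hmdef
  have hmcont : Continuous m :=
    Continuous.subtype_mk (Continuous.subtype_mk continuous_subtype_val _) _
  set ρ : C(W, BoundedContinuousFunction X ℝ) :=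
    ⟨fun w => ((rr (m w) : V) : BoundedContinuousFunction X ℝ),
      continuous_subtype_val.comp (rr.continuous.comp hmcont)⟩ with hρdef
  refine ⟨W, ρ, hVopen.isOpenMap_subtype_val U hUopen, ?_, ?_, ?_⟩
  · rintro _ ⟨x, rfl⟩
    exact ⟨j' x, hUrange (mem_range_self x), rfl⟩
  · intro w
    obtain ⟨x, hx⟩ := hr1 (m w)
    exact ⟨x, by rw [hρdef]; simp only [ContinuousMap.coe_mk]; rw [← hx]⟩
  · intro w hw
    obtain ⟨x, hx⟩ := hw
    have hmw : (m w : V) ∈ Set.range j' := ⟨x, Subtype.ext hx⟩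
    have := hr2 (m w) hmw
    rw [hρdef]
    simp only [ContinuousMap.coe_mk]
    rw [this]

lemma small_homotopy [Nonempty X] [LocallyCompactSpace X] (hANR : IsANR X)
    (u : C(I, X)) {ε : ℝ} (hε : 0 < ε) :
    ∃ δ > 0, ∀ v : C(I, X), (∀ s, dist (u s) (v s) < δ) →
      ∃ H : C(I × I, X), (∀ d, H (d, 0) = u d) ∧ (∀ d, H (d, 1) = v d) ∧
        ∀ p : I × I, dist (H p) (u p.1) < ε := by
  classical
  obtain ⟨W, ρ, hWopen, hSW, hρS, hρid⟩ := exists_retraction hANR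
  set e := (kur_isometry (X := X)).isometryEquivOnRange with hedef
  -- the compact set K = kur ∘ u (I)
  set K : Set (BoundedContinuousFunction X ℝ) := Set.range (fun d : I => kur (u d)) with hKdef
  have hKW : K ⊆ W := by rintro _ ⟨d, rfl⟩; exact hSW (mem_range_self _)
  have hKcpt : IsCompact K :=
    isCompact_range (kur_isometry.continuous.comp u.continuous)
  -- the open set where the retraction moves points less than ε/4
  set A : Set (BoundedContinuousFunction X ℝ) :=
    Subtype.val '' {w : W | dist (ρ w) (w : BoundedContinuousFunction X ℝ) < ε / 4} with hAdef
  have hAopen : IsOpen A := by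
    apply hWopen.isOpenMap_subtype_val
    exact isOpen_lt (Continuous.dist ρ.continuous continuous_subtype_val) continuous_const
  have hAW : A ⊆ W := by rintro _ ⟨w, hw, rfl⟩; exact w.2
  have hKA : K ⊆ A := by
    rintro _ ⟨d, rfl⟩
    refine ⟨⟨kur (u d), hSW ⟨u d, rfl⟩⟩, ?_, rfl⟩
    have : ρ ⟨kur (u d), hSW ⟨u d, rfl⟩⟩ = kur (u d) :=
      hρid _ ⟨u d, rfl⟩
    simp only [mem_setOf_eq, this, dist_self]
    linarith
  obtain ⟨δ₀, hδ₀, hth⟩ := hKcpt.exists_thickening_subset_open hAopen hKA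
  refine ⟨min δ₀ (ε / 4), lt_min hδ₀ (by linarith), fun v hv => ?_⟩
  -- the segment map
  set seg : I × I → BoundedContinuousFunction X ℝ :=
    fun p => kur (u p.1) + (p.2 : ℝ) • (kur (v p.1) - kur (u p.1)) with hsegdef
  have hsegcont : Continuous seg := by
    apply Continuous.add
    · exact kur_isometry.continuous.comp (u.continuous.comp continuous_fst)
    · exact Continuous.smul ((continuous_subtype_val (p := fun x : ℝ => x ∈ Set.Icc (0:ℝ) 1)).comp continuous_snd)
        ((kur_isometry.continuous.comp (v.continuous.comp continuous_fst)).sub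
          (kur_isometry.continuous.comp (u.continuous.comp continuous_fst)))
  have hsegclose : ∀ p : I × I, dist (seg p) (kur (u p.1)) < min δ₀ (ε / 4) := by
    intro p
    show dist (kur (u p.1) + (p.2 : ℝ) • (kur (v p.1) - kur (u p.1))) (kur (u p.1)) < _
    have hns : ‖(p.2 : ℝ) • (kur (v p.1) - kur (u p.1))‖
        = ‖(p.2 : ℝ)‖ * ‖kur (v p.1) - kur (u p.1)‖ :=
      norm_smul ((p.2 : ℝ)) (kur (v p.1) - kur (u p.1))
    rw [dist_eq_norm, add_sub_cancel_left, hns]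
    calc ‖(p.2 : ℝ)‖ * ‖kur (v p.1) - kur (u p.1)‖
        ≤ 1 * ‖kur (v p.1) - kur (u p.1)‖ := by
          apply mul_le_mul_of_nonneg_right _ (norm_nonneg _)
          rw [Real.norm_eq_abs, abs_of_nonneg p.2.2.1]
          exact p.2.2.2
      _ = dist (kur (v p.1)) (kur (u p.1)) := by rw [one_mul, dist_eq_norm]
      _ = dist (v p.1) (u p.1) := kur_isometry.dist_eq _ _
      _ < min δ₀ (ε / 4) := by rw [dist_comm]; exact hv p.1
  have hsegA : ∀ p : I × I, seg p ∈ A := by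
    intro p
    apply hth
    rw [Metric.mem_thickening_iff]
    exact ⟨kur (u p.1), mem_range_self _, lt_of_lt_of_le (hsegclose p) (min_le_left _ _)⟩
  have hsegW : ∀ p : I × I, seg p ∈ W := fun p => hAW (hsegA p)
  have hmove : ∀ p : I × I, dist (ρ ⟨seg p, hsegW p⟩) (seg p) < ε / 4 := by
    intro p
    obtain ⟨w, hw, he⟩ := hsegA p
    have heq : (⟨seg p, hsegW p⟩ : W) = w := Subtype.ext he.symm
    rw [heq, ← he]; exact hw
  have hmem : ∀ p : I × I, ρ ⟨seg p, hsegW p⟩ ∈ Set.range (kur (X := X)) :=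
    fun p => hρS _
  set H : C(I × I, X) :=
    ⟨fun p => e.symm ⟨ρ ⟨seg p, hsegW p⟩, hmem p⟩, by
      apply e.symm.continuous.comp
      apply Continuous.subtype_mk
      exact ρ.continuous.comp (Continuous.subtype_mk hsegcont _)⟩ with hHdef
  have hkurH : ∀ p : I × I, kur (H p) = ρ ⟨seg p, hsegW p⟩ := by
    intro p
    rw [hHdef]
    simp only [ContinuousMap.coe_mk]
    have h1 := e.apply_symm_apply ⟨ρ ⟨seg p, hsegW p⟩, hmem p⟩
    have h3 : kur (e.symm (⟨ρ ⟨seg p, hsegW p⟩, hmem p⟩ : Set.range (kur (X := X))))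
        = ((e (e.symm ⟨ρ ⟨seg p, hsegW p⟩, hmem p⟩) : Set.range (kur (X := X)))
          : BoundedContinuousFunction X ℝ) := rfl
    rw [h3, h1]
  have hkur_inj : Function.Injective (kur (X := X)) := kur_isometry.injective
  refine ⟨H, ?_, ?_, ?_⟩
  · intro d
    apply hkur_inj
    rw [hkurH (d, 0)]
    have hseg0 : seg (d, 0) = kur (u d) := by rw [hsegdef]; simp
    have hmem0 : ((⟨seg (d, 0), hsegW (d, 0)⟩ : W) : BoundedContinuousFunction X ℝ)
        ∈ Set.range (kur (X := X)) := by
      show seg (d, 0) ∈ _; rw [hseg0]; exact ⟨u d, rfl⟩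
    rw [hρid ⟨seg (d, 0), hsegW (d, 0)⟩ hmem0]
    exact hseg0
  · intro d
    apply hkur_inj
    rw [hkurH (d, 1)]
    have hseg1 : seg (d, 1) = kur (v d) := by
      rw [hsegdef]; simp
    have hmem1 : ((⟨seg (d, 1), hsegW (d, 1)⟩ : W) : BoundedContinuousFunction X ℝ)
        ∈ Set.range (kur (X := X)) := by
      show seg (d, 1) ∈ _; rw [hseg1]; exact ⟨v d, rfl⟩
    rw [hρid ⟨seg (d, 1), hsegW (d, 1)⟩ hmem1]
    exact hseg1
  · intro p
    have : dist (H p) (u p.1) = dist (kur (H p)) (kur (u p.1)) :=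
      (kur_isometry.dist_eq _ _).symm
    rw [this, hkurH p]
    calc dist (ρ ⟨seg p, hsegW p⟩) (kur (u p.1))
        ≤ dist (ρ ⟨seg p, hsegW p⟩) (seg p) + dist (seg p) (kur (u p.1)) := dist_triangle _ _ _
      _ < ε / 4 + min δ₀ (ε / 4) := add_lt_add (hmove p) (hsegclose p)
      _ ≤ ε / 4 + ε / 4 := by linarith [min_le_right δ₀ (ε / 4)]
      _ < ε := by linarith

lemma proj_le (x : ℝ) (h : x ≤ 0) : Set.projIcc (0:ℝ) 1 zero_le_one x = 0 := by
  rw [Set.projIcc_of_le_left _ h]; rfl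

lemma proj_ge (x : ℝ) (h : 1 ≤ x) : Set.projIcc (0:ℝ) 1 zero_le_one x = 1 := by
  rw [Set.projIcc_of_right_le _ h]; rfl

lemma proj_mem (x : ℝ) (h1 : 0 ≤ x) (h2 : x ≤ 1) :
    ((Set.projIcc (0:ℝ) 1 zero_le_one x : I) : ℝ) = x := by
  rw [Set.projIcc_of_mem _ ⟨h1, h2⟩]

lemma proj_eq_zero {x : ℝ} (h : Set.projIcc (0:ℝ) 1 zero_le_one x = 0) : x ≤ 0 := by
  by_contra hx
  push_neg at hx
  rcases le_or_gt 1 x with h1 | h1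
  · have := proj_ge x h1
    rw [this] at h
    exact one_ne_zero (congrArg Subtype.val h)
  · have := proj_mem x hx.le h1.le
    rw [h] at this
    simp at this
    linarith
lemma proj_eq_one {x : ℝ} (h : Set.projIcc (0:ℝ) 1 zero_le_one x = 1) : 1 ≤ x := by
  by_contra hx
  push_neg at hx
  rcases le_or_gt x 0 with h1 | h1
  · have := proj_le x h1
    rw [this] at h
    exact one_ne_zero (congrArg Subtype.val h).symm
  · have := proj_mem x h1.le hx.le
    rw [h] at this
    simp at this
    linarith


/-- Collar construction: modify a homotopy so that it is `h` near the bottom,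
`k` near the top, and a reparametrization of `f` in between. -/
lemma build_collar (f : C(I × I, X)) (h k : C(I, X)) (Hb Ht : C(I × I, X)) (α : ℝ)
    (hα : 0 < α) (hα2 : α ≤ 1/4)
    (hHb0 : ∀ d, Hb (d, 0) = f (d, 0)) (hHb1 : ∀ d, Hb (d, 1) = h d)
    (hHt0 : ∀ d, Ht (d, 0) = f (d, 1)) (hHt1 : ∀ d, Ht (d, 1) = k d) :
    ∃ f' : C(I × I, X),
      (∀ p : I × I, (p.2 : ℝ) ≤ α/2 → f' p = h p.1) ∧
      (∀ p : I × I, 1 - α/2 ≤ (p.2 : ℝ) → f' p = k p.1) ∧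
      (∀ p : I × I,
        (∃ s, f' p = Hb (p.1, s) ∧ (p.2 : ℝ) ≤ α) ∨
        (∃ t' : I, f' p = f (p.1, t') ∧ |(t' : ℝ) - (p.2 : ℝ)| ≤ 2*α) ∨
        (∃ s, f' p = Ht (p.1, s) ∧ 1 - α ≤ (p.2 : ℝ))) := by
  have h12 : (0:ℝ) < 1 - 2*α := by linarith
  set q0 : ℝ → I := fun t => Set.projIcc (0:ℝ) 1 zero_le_one (2*(α - t)/α) with hq0
  set qm : ℝ → I := fun t => Set.projIcc (0:ℝ) 1 zero_le_one ((t - α)/(1 - 2*α)) with hqm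
  set q1 : ℝ → I := fun t => Set.projIcc (0:ℝ) 1 zero_le_one (2*(t - (1 - α))/α) with hq1
  have hq0c : Continuous q0 := continuous_projIcc.comp (by fun_prop)
  have hqmc : Continuous qm := continuous_projIcc.comp (by fun_prop)
  have hq1c : Continuous q1 := continuous_projIcc.comp (by fun_prop)
  set F : I × I → X := fun p =>
    if (p.2 : ℝ) ≤ α then Hb (p.1, q0 (p.2 : ℝ))
    else if (p.2 : ℝ) ≤ 1 - α then f (p.1, qm (p.2 : ℝ))
    else Ht (p.1, q1 (p.2 : ℝ)) with hF
  have hco : Continuous fun p : I × I => ((p.2 : I) : ℝ) :=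
    continuous_subtype_val.comp continuous_snd
  have hc1 : Continuous fun p : I × I => Hb (p.1, q0 (p.2 : ℝ)) :=
    Hb.continuous.comp (continuous_fst.prodMk (hq0c.comp hco))
  have hc2 : Continuous fun p : I × I => f (p.1, qm (p.2 : ℝ)) :=
    f.continuous.comp (continuous_fst.prodMk (hqmc.comp hco))
  have hc3 : Continuous fun p : I × I => Ht (p.1, q1 (p.2 : ℝ)) :=
    Ht.continuous.comp (continuous_fst.prodMk (hq1c.comp hco))
  have hinner : Continuous fun p : I × I =>
      if (p.2 : ℝ) ≤ 1 - α then f (p.1, qm (p.2 : ℝ)) else Ht (p.1, q1 (p.2 : ℝ)) := by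
    refine Continuous.if_le hc2 hc3 hco continuous_const ?_
    intro p hp
    have hvm : qm ((p.2 : I) : ℝ) = 1 := by
      show Set.projIcc (0:ℝ) 1 zero_le_one (((p.2:ℝ) - α)/(1 - 2*α)) = 1
      apply proj_ge
      rw [hp, show (1:ℝ) - α - α = 1 - 2*α by ring, div_self h12.ne']
    have hv1 : q1 ((p.2 : I) : ℝ) = 0 := by
      show Set.projIcc (0:ℝ) 1 zero_le_one (2*((p.2:ℝ) - (1 - α))/α) = 0
      apply proj_le
      rw [hp, sub_self, mul_zero, zero_div]
    show f (p.1, qm ((p.2 : I) : ℝ)) = Ht (p.1, q1 ((p.2 : I) : ℝ))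
    rw [hvm, hv1, hHt0]
  have hFc : Continuous F := by
    rw [hF]
    refine Continuous.if_le hc1 hinner hco continuous_const ?_
    intro p hp
    have hv0 : q0 ((p.2 : I) : ℝ) = 0 := by
      show Set.projIcc (0:ℝ) 1 zero_le_one (2*(α - (p.2:ℝ))/α) = 0
      apply proj_le
      rw [hp, sub_self, mul_zero, zero_div]
    have hvm : qm ((p.2 : I) : ℝ) = 0 := by
      show Set.projIcc (0:ℝ) 1 zero_le_one (((p.2:ℝ) - α)/(1 - 2*α)) = 0
      apply proj_le
      rw [hp, sub_self, zero_div]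
    have hple : (p.2 : ℝ) ≤ 1 - α := by rw [hp]; linarith
    show Hb (p.1, q0 ((p.2 : I) : ℝ)) =
      if (p.2 : ℝ) ≤ 1 - α then f (p.1, qm ((p.2:I) : ℝ)) else Ht (p.1, q1 ((p.2:I) : ℝ))
    rw [if_pos hple, hv0, hvm]
    exact hHb0 p.1
  refine ⟨⟨F, hFc⟩, ?_, ?_, ?_⟩
  · intro p hp
    have hpα : (p.2 : ℝ) ≤ α := by linarith
    have harg : 1 ≤ 2*(α - (p.2:ℝ))/α := by
      rw [le_div_iff₀ hα]; linarith
    have hv : q0 ((p.2 : I) : ℝ) = 1 := proj_ge _ harg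
    show F p = h p.1
    rw [hF]
    simp only [if_pos hpα]
    rw [hv]
    exact hHb1 p.1
  · intro p hp
    have hp1 : ¬ ((p.2 : ℝ) ≤ α) := by push_neg; linarith
    have hp2 : ¬ ((p.2 : ℝ) ≤ 1 - α) := by push_neg; linarith
    have harg : 1 ≤ 2*((p.2:ℝ) - (1 - α))/α := by
      rw [le_div_iff₀ hα]; linarith
    have hv : q1 ((p.2 : I) : ℝ) = 1 := proj_ge _ harg
    show F p = k p.1
    rw [hF]
    simp only [if_neg hp1, if_neg hp2]
    rw [hv]
    exact hHt1 p.1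
  · intro p
    by_cases hb : (p.2 : ℝ) ≤ α
    · left
      exact ⟨q0 (p.2 : ℝ), by show F p = _; rw [hF]; simp only [if_pos hb], hb⟩
    · by_cases hm : (p.2 : ℝ) ≤ 1 - α
      · right; left
        push_neg at hb
        refine ⟨qm (p.2 : ℝ), by show F p = _; rw [hF]; simp only [if_neg (not_le.2 hb), if_pos hm], ?_⟩
        have h0 : 0 ≤ ((p.2:ℝ) - α)/(1 - 2*α) := by
          apply div_nonneg _ h12.le; linarith
        have h1 : ((p.2:ℝ) - α)/(1 - 2*α) ≤ 1 := by
          rw [div_le_one h12]; linarith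
        have hval : ((qm (p.2:ℝ) : I) : ℝ) = ((p.2:ℝ) - α)/(1 - 2*α) := by
          rw [hqm]; exact proj_mem _ h0 h1
        rw [hval]
        have hmul : (((p.2:ℝ) - α)/(1 - 2*α)) * (1 - 2*α) = (p.2:ℝ) - α :=
          div_mul_cancel₀ _ h12.ne'
        rw [abs_le]
        constructor <;> nlinarith [hmul, p.2.2.1, p.2.2.2]
      · right; right
        push_neg at hm
        exact ⟨q1 (p.2 : ℝ), by show F p = _; rw [hF]; simp only [if_neg hb, if_neg (not_le.2 hm)], hm.le⟩

end DCPwork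

open DCPwork Set Metric in
/-- If `X` is a locally compact metric ANR with the Disjoint Arcs Property and `X × ℝ`
(with the sum metric) has the Disjoint Disks Property, then `X` has the
Disjoint Path Concordances Property. -/
theorem dcp_of_ddp {X : Type u} [MetricSpace X] [LocallyCompactSpace X]
    (hANR : IsANR X) (hDAP : DAP X) (hDDP : DDPsum X) :
    DCP X := by
  intro f₁ f₂ ε hε
  rcases isEmpty_or_nonempty X with hX | hX
  · exact (hX.false (f₁ (0, 0))).elim
  have hε8 : 0 < ε/8 := by linarith
  -- boundary paths
  set b₁ : C(I, X) := ⟨fun d => f₁ (d, 0),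
    f₁.continuous.comp (continuous_id.prodMk continuous_const)⟩ with hb₁def
  set b₂ : C(I, X) := ⟨fun d => f₂ (d, 0),
    f₂.continuous.comp (continuous_id.prodMk continuous_const)⟩ with hb₂def
  set c₁ : C(I, X) := ⟨fun d => f₁ (d, 1),
    f₁.continuous.comp (continuous_id.prodMk continuous_const)⟩ with hc₁def
  set c₂ : C(I, X) := ⟨fun d => f₂ (d, 1),
    f₂.continuous.comp (continuous_id.prodMk continuous_const)⟩ with hc₂def
  -- small homotopy moduli
  obtain ⟨δ₁, hδ₁, Hb₁spec⟩ := small_homotopy hANR b₁ hε8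
  obtain ⟨δ₂, hδ₂, Hb₂spec⟩ := small_homotopy hANR b₂ hε8
  obtain ⟨δ₃, hδ₃, Ht₁spec⟩ := small_homotopy hANR c₁ hε8
  obtain ⟨δ₄, hδ₄, Ht₂spec⟩ := small_homotopy hANR c₂ hε8
  -- disjoint approximations of the boundary paths
  obtain ⟨h₁, h₂, hh₁, hh₂, hdisjb⟩ := hDAP b₁ b₂ (min δ₁ δ₂) (lt_min hδ₁ hδ₂)
  obtain ⟨k₁, k₂, hk₁, hk₂, hdisjt⟩ := hDAP c₁ c₂ (min δ₃ δ₄) (lt_min hδ₃ hδ₄)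
  -- homotopies between boundary paths and their disjoint approximations
  obtain ⟨Hb₁, hHb₁0, hHb₁1, hHb₁tr⟩ :=
    Hb₁spec h₁ (fun s => lt_of_lt_of_le (hh₁ s) (min_le_left _ _))
  obtain ⟨Hb₂, hHb₂0, hHb₂1, hHb₂tr⟩ :=
    Hb₂spec h₂ (fun s => lt_of_lt_of_le (hh₂ s) (min_le_right _ _))
  obtain ⟨Ht₁, hHt₁0, hHt₁1, hHt₁tr⟩ :=
    Ht₁spec k₁ (fun s => lt_of_lt_of_le (hk₁ s) (min_le_left _ _))
  obtain ⟨Ht₂, hHt₂0, hHt₂1, hHt₂tr⟩ :=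
    Ht₂spec k₂ (fun s => lt_of_lt_of_le (hk₂ s) (min_le_right _ _))
  -- disjoint thickenings
  obtain ⟨δb, hδb, hTb⟩ := (Set.disjoint_iff_inter_eq_empty.2 hdisjb).exists_thickenings
    (isCompact_range h₁.continuous) (isCompact_range h₂.continuous).isClosed
  obtain ⟨δt, hδt, hTt⟩ := (Set.disjoint_iff_inter_eq_empty.2 hdisjt).exists_thickenings
    (isCompact_range k₁.continuous) (isCompact_range k₂.continuous).isClosed
  -- uniform continuity
  obtain ⟨η₁, hη₁, hu₁⟩ := Metric.uniformContinuous_iff.1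
    (CompactSpace.uniformContinuous_of_continuous f₁.continuous) (ε/8) hε8
  obtain ⟨η₂, hη₂, hu₂⟩ := Metric.uniformContinuous_iff.1
    (CompactSpace.uniformContinuous_of_continuous f₂.continuous) (ε/8) hε8
  set α : ℝ := min (1/4) (min η₁ η₂ / 4) with hαdef
  have hα : 0 < α := lt_min (by norm_num) (by positivity)
  have hα2 : α ≤ 1/4 := min_le_left _ _
  have hαη : 2*α < min η₁ η₂ := by
    have h1 : α ≤ min η₁ η₂ / 4 := min_le_right _ _
    have h2 : 0 < min η₁ η₂ := lt_min hη₁ hη₂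
    linarith
  -- collars
  obtain ⟨f₁', hf₁'b, hf₁'t, hf₁'cl⟩ :=
    build_collar f₁ h₁ k₁ Hb₁ Ht₁ α hα hα2 hHb₁0 hHb₁1 hHt₁0 hHt₁1
  obtain ⟨f₂', hf₂'b, hf₂'t, hf₂'cl⟩ :=
    build_collar f₂ h₂ k₂ Hb₂ Ht₂ α hα hα2 hHb₂0 hHb₂1 hHt₂0 hHt₂1
  -- collars are close to the original homotopies
  have hf₁'close : ∀ p : I × I, dist (f₁ p) (f₁' p) < ε/4 := by
    intro p
    rcases hf₁'cl p with ⟨s, hs, hple⟩ | ⟨t', ht', htd⟩ | ⟨s, hs, hple⟩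
    · rw [hs]
      have hd : dist p ((p.1, (0:I)) : I × I) < η₁ := by
        rw [Prod.dist_eq]
        apply max_lt (by simpa [dist_self] using hη₁)
        rw [Subtype.dist_eq, Real.dist_eq]
        have : ((0:I):ℝ) = 0 := rfl
        rw [this, sub_zero, abs_of_nonneg p.2.2.1]
        calc (p.2 : ℝ) ≤ α := hple
          _ < η₁ := by have := lt_min hη₁ hη₂; nlinarith [min_le_left η₁ η₂]
      calc dist (f₁ p) (Hb₁ (p.1, s))
          ≤ dist (f₁ p) (f₁ (p.1, 0)) + dist (f₁ (p.1, 0)) (Hb₁ (p.1, s)) := dist_triangle _ _ _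
        _ < ε/8 + ε/8 := add_lt_add (hu₁ hd) (by rw [dist_comm]; exact hHb₁tr (p.1, s))
        _ = ε/4 := by ring
    · rw [ht']
      apply lt_of_lt_of_le (hu₁ ?_) (by linarith : ε/8 ≤ ε/4)
      rw [Prod.dist_eq]
      apply max_lt (by simpa [dist_self] using hη₁)
      rw [Subtype.dist_eq, Real.dist_eq]
      calc |(p.2 : ℝ) - (t' : ℝ)| = |(t' : ℝ) - (p.2 : ℝ)| := abs_sub_comm _ _
        _ ≤ 2*α := htd
        _ < min η₁ η₂ := hαη
        _ ≤ η₁ := min_le_left _ _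
    · rw [hs]
      have hd : dist p ((p.1, (1:I)) : I × I) < η₁ := by
        rw [Prod.dist_eq]
        apply max_lt (by simpa [dist_self] using hη₁)
        rw [Subtype.dist_eq, Real.dist_eq]
        have h1 : ((1:I):ℝ) = 1 := rfl
        rw [h1]
        rw [abs_of_nonpos (by linarith [p.2.2.2] : (p.2:ℝ) - 1 ≤ 0)]
        have : α < η₁ := by
          have := min_le_left η₁ η₂; linarith
        linarith [p.2.2.2]
      calc dist (f₁ p) (Ht₁ (p.1, s))
          ≤ dist (f₁ p) (f₁ (p.1, 1)) + dist (f₁ (p.1, 1)) (Ht₁ (p.1, s)) := dist_triangle _ _ _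
        _ < ε/8 + ε/8 := add_lt_add (hu₁ hd) (by rw [dist_comm]; exact hHt₁tr (p.1, s))
        _ = ε/4 := by ring
  have hf₂'close : ∀ p : I × I, dist (f₂ p) (f₂' p) < ε/4 := by
    intro p
    rcases hf₂'cl p with ⟨s, hs, hple⟩ | ⟨t', ht', htd⟩ | ⟨s, hs, hple⟩
    · rw [hs]
      have hd : dist p ((p.1, (0:I)) : I × I) < η₂ := by
        rw [Prod.dist_eq]
        apply max_lt (by simpa [dist_self] using hη₂)
        rw [Subtype.dist_eq, Real.dist_eq]
        have : ((0:I):ℝ) = 0 := rfl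
        rw [this, sub_zero, abs_of_nonneg p.2.2.1]
        calc (p.2 : ℝ) ≤ α := hple
          _ < η₂ := by have := min_le_right η₁ η₂; linarith
      calc dist (f₂ p) (Hb₂ (p.1, s))
          ≤ dist (f₂ p) (f₂ (p.1, 0)) + dist (f₂ (p.1, 0)) (Hb₂ (p.1, s)) := dist_triangle _ _ _
        _ < ε/8 + ε/8 := add_lt_add (hu₂ hd) (by rw [dist_comm]; exact hHb₂tr (p.1, s))
        _ = ε/4 := by ring
    · rw [ht']
      apply lt_of_lt_of_le (hu₂ ?_) (by linarith : ε/8 ≤ ε/4)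
      rw [Prod.dist_eq]
      apply max_lt (by simpa [dist_self] using hη₂)
      rw [Subtype.dist_eq, Real.dist_eq]
      calc |(p.2 : ℝ) - (t' : ℝ)| = |(t' : ℝ) - (p.2 : ℝ)| := abs_sub_comm _ _
        _ ≤ 2*α := htd
        _ < min η₁ η₂ := hαη
        _ ≤ η₂ := min_le_right _ _
    · rw [hs]
      have hd : dist p ((p.1, (1:I)) : I × I) < η₂ := by
        rw [Prod.dist_eq]
        apply max_lt (by simpa [dist_self] using hη₂)
        rw [Subtype.dist_eq, Real.dist_eq]
        have h1 : ((1:I):ℝ) = 1 := rfl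
        rw [h1]
        rw [abs_of_nonpos (by linarith [p.2.2.2] : (p.2:ℝ) - 1 ≤ 0)]
        have : α < η₂ := by
          have := min_le_right η₁ η₂; linarith
        linarith [p.2.2.2]
      calc dist (f₂ p) (Ht₂ (p.1, s))
          ≤ dist (f₂ p) (f₂ (p.1, 1)) + dist (f₂ (p.1, 1)) (Ht₂ (p.1, s)) := dist_triangle _ _ _
        _ < ε/8 + ε/8 := add_lt_add (hu₂ hd) (by rw [dist_comm]; exact hHt₂tr (p.1, s))
        _ = ε/4 := by ring
  -- the vertical tolerance
  set ε' : ℝ := min (min (α/8) (ε/4)) (min (min δb δt / 2) (1/8)) with hε'def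
  have hε'pos : 0 < ε' :=
    lt_min (lt_min (by linarith) (by linarith))
      (lt_min (by positivity) (by norm_num))
  have hε'α : ε' ≤ α/8 := le_trans (min_le_left _ _) (min_le_left _ _)
  have hε'ε : ε' ≤ ε/4 := le_trans (min_le_left _ _) (min_le_right _ _)
  have hε'δb : ε' < δb := by
    have h1 : ε' ≤ min δb δt / 2 := le_trans (min_le_right _ _) (min_le_left _ _)
    have h2 : min δb δt ≤ δb := min_le_left _ _
    have h3 : 0 < min δb δt := lt_min hδb hδt
    linarith
  have hε'δt : ε' < δt := by
    have h1 : ε' ≤ min δb δt / 2 := le_trans (min_le_right _ _) (min_le_left _ _)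
    have h2 : min δb δt ≤ δt := min_le_right _ _
    have h3 : 0 < min δb δt := lt_min hδb hδt
    linarith
  have hε'18 : ε' ≤ 1/8 := le_trans (min_le_right _ _) (min_le_right _ _)
  have h12 : (0:ℝ) < 1 - 2*ε' := by linarith
  -- the DDP input maps
  set ft₁ : C(I × I, X × ℝ) := ⟨fun p => (f₁' p, ((p.2 : I) : ℝ)),
    f₁'.continuous.prodMk (continuous_subtype_val.comp continuous_snd)⟩ with hft₁def
  set ft₂ : C(I × I, X × ℝ) := ⟨fun p => (f₂' p, ((p.2 : I) : ℝ)),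
    f₂'.continuous.prodMk (continuous_subtype_val.comp continuous_snd)⟩ with hft₂def
  obtain ⟨g₁, g₂, hg₁, hg₂, hgdisj⟩ := hDDP ft₁ ft₂ ε' hε'pos
  have hg₁X : ∀ p : I × I, dist (f₁' p) ((g₁ p).1) < ε' := by
    intro p
    have h := hg₁ p
    unfold sumDist at h
    have e1 : (ft₁ p).1 = f₁' p := rfl
    have e2 : (ft₁ p).2 = ((p.2 : I) : ℝ) := rfl
    rw [e1, e2] at h
    linarith [dist_nonneg (x := ((p.2 : I) : ℝ)) (y := (g₁ p).2)]
  have hg₁T : ∀ p : I × I, |((p.2 : I) : ℝ) - (g₁ p).2| < ε' := by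
    intro p
    have h := hg₁ p
    unfold sumDist at h
    have e1 : (ft₁ p).1 = f₁' p := rfl
    have e2 : (ft₁ p).2 = ((p.2 : I) : ℝ) := rfl
    rw [e1, e2] at h
    rw [← Real.dist_eq]
    linarith [dist_nonneg (x := f₁' p) (y := (g₁ p).1)]
  have hg₂X : ∀ p : I × I, dist (f₂' p) ((g₂ p).1) < ε' := by
    intro p
    have h := hg₂ p
    unfold sumDist at h
    have e1 : (ft₂ p).1 = f₂' p := rfl
    have e2 : (ft₂ p).2 = ((p.2 : I) : ℝ) := rfl
    rw [e1, e2] at h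
    linarith [dist_nonneg (x := ((p.2 : I) : ℝ)) (y := (g₂ p).2)]
  have hg₂T : ∀ p : I × I, |((p.2 : I) : ℝ) - (g₂ p).2| < ε' := by
    intro p
    have h := hg₂ p
    unfold sumDist at h
    have e1 : (ft₂ p).1 = f₂' p := rfl
    have e2 : (ft₂ p).2 = ((p.2 : I) : ℝ) := rfl
    rw [e1, e2] at h
    rw [← Real.dist_eq]
    linarith [dist_nonneg (x := f₂' p) (y := (g₂ p).1)]
  -- the level squeezing map
  set sq : ℝ → I := fun s => Set.projIcc (0:ℝ) 1 zero_le_one ((s - ε')/(1 - 2*ε')) with hsqdef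
  have hsqc : Continuous sq := continuous_projIcc.comp (by fun_prop)
  set F₁ : C(I × I, X × I) := ⟨fun p => ((g₁ p).1, sq ((g₁ p).2)),
    (continuous_fst.comp g₁.continuous).prodMk
      (hsqc.comp (continuous_snd.comp g₁.continuous))⟩ with hF₁def
  set F₂ : C(I × I, X × I) := ⟨fun p => ((g₂ p).1, sq ((g₂ p).2)),
    (continuous_fst.comp g₂.continuous).prodMk
      (hsqc.comp (continuous_snd.comp g₂.continuous))⟩ with hF₂def
  -- path concordance property
  have hsq0 : ∀ s : ℝ, s ≤ ε' → sq s = 0 := by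
    intro s hs
    apply proj_le
    apply div_nonpos_of_nonpos_of_nonneg (by linarith) (by linarith)
  have hsq1 : ∀ s : ℝ, 1 - ε' ≤ s → sq s = 1 := by
    intro s hs
    apply proj_ge
    rw [le_div_iff₀ h12]
    linarith
  have hPC₁ : IsPathConcordance F₁ := by
    intro d
    constructor
    · show sq ((g₁ (d, 0)).2) = 0
      apply hsq0
      have := hg₁T (d, 0)
      have h0 : (((d, (0:I)).2 : I) : ℝ) = 0 := rfl
      rw [h0] at this
      rcases abs_lt.1 this with ⟨hl, hr⟩
      linarith
    · show sq ((g₁ (d, 1)).2) = 1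
      apply hsq1
      have := hg₁T (d, 1)
      have h0 : (((d, (1:I)).2 : I) : ℝ) = 1 := rfl
      rw [h0] at this
      rcases abs_lt.1 this with ⟨hl, hr⟩
      linarith
  have hPC₂ : IsPathConcordance F₂ := by
    intro d
    constructor
    · show sq ((g₂ (d, 0)).2) = 0
      apply hsq0
      have := hg₂T (d, 0)
      have h0 : (((d, (0:I)).2 : I) : ℝ) = 0 := rfl
      rw [h0] at this
      rcases abs_lt.1 this with ⟨hl, hr⟩
      linarith
    · show sq ((g₂ (d, 1)).2) = 1
      apply hsq1
      have := hg₂T (d, 1)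
      have h0 : (((d, (1:I)).2 : I) : ℝ) = 1 := rfl
      rw [h0] at this
      rcases abs_lt.1 this with ⟨hl, hr⟩
      linarith
  -- closeness
  have hF₁close : ∀ p : I × I, dist (f₁ p) ((F₁ p).1) < ε := by
    intro p
    have e : (F₁ p).1 = (g₁ p).1 := rfl
    rw [e]
    calc dist (f₁ p) ((g₁ p).1)
        ≤ dist (f₁ p) (f₁' p) + dist (f₁' p) ((g₁ p).1) := dist_triangle _ _ _
      _ < ε/4 + ε' := add_lt_add (hf₁'close p) (hg₁X p)
      _ ≤ ε/4 + ε/4 := by linarith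
      _ < ε := by linarith
  have hF₂close : ∀ p : I × I, dist (f₂ p) ((F₂ p).1) < ε := by
    intro p
    have e : (F₂ p).1 = (g₂ p).1 := rfl
    rw [e]
    calc dist (f₂ p) ((g₂ p).1)
        ≤ dist (f₂ p) (f₂' p) + dist (f₂' p) ((g₂ p).1) := dist_triangle _ _ _
      _ < ε/4 + ε' := add_lt_add (hf₂'close p) (hg₂X p)
      _ ≤ ε/4 + ε/4 := by linarith
      _ < ε := by linarith
  -- disjointness
  have hdisjF : Set.range F₁ ∩ Set.range F₂ = ∅ := by
    rw [Set.eq_empty_iff_forall_notMem]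
    rintro z ⟨⟨p, hp⟩, ⟨q, hq⟩⟩
    have hF : F₁ p = F₂ q := hp.trans hq.symm
    have h1' : (F₁ p).1 = (F₂ q).1 := congrArg Prod.fst hF
    have h1 : (g₁ p).1 = (g₂ q).1 := h1'
    have h2' : (F₁ p).2 = (F₂ q).2 := congrArg Prod.snd hF
    have h2 : sq ((g₁ p).2) = sq ((g₂ q).2) := h2'
    have ht₁ := hg₁T p
    have ht₂ := hg₂T q
    by_cases hc0 : ((g₁ p).2 - ε')/(1 - 2*ε') ≤ 0
    · -- collision at the bottom level
      have hsqp : sq ((g₁ p).2) = 0 := proj_le _ hc0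
      have hsqq : sq ((g₂ q).2) = 0 := by rw [← h2, hsqp]
      have hs₂ : ((g₂ q).2 - ε')/(1 - 2*ε') ≤ 0 := proj_eq_zero hsqq
      have hs₁' : (g₁ p).2 ≤ ε' := by
        by_contra hcon
        push_neg at hcon
        have := div_pos (by linarith : (0:ℝ) < (g₁ p).2 - ε') h12
        linarith
      have hs₂' : (g₂ q).2 ≤ ε' := by
        by_contra hcon
        push_neg at hcon
        have := div_pos (by linarith : (0:ℝ) < (g₂ q).2 - ε') h12
        linarith
      have htp : ((p.2 : I) : ℝ) ≤ α/2 := by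
        rcases abs_lt.1 ht₁ with ⟨hl, hr⟩
        linarith
      have htq : ((q.2 : I) : ℝ) ≤ α/2 := by
        rcases abs_lt.1 ht₂ with ⟨hl, hr⟩
        linarith
      have e₁ : f₁' p = h₁ p.1 := hf₁'b p htp
      have e₂ : f₂' q = h₂ q.1 := hf₂'b q htq
      have d₁ : dist ((g₁ p).1) (h₁ p.1) < δb := by
        have := hg₁X p
        rw [e₁, dist_comm] at this
        linarith
      have d₂ : dist ((g₂ q).1) (h₂ q.1) < δb := by
        have := hg₂X q
        rw [e₂, dist_comm] at this
        linarith
      have m₁ : (g₁ p).1 ∈ Metric.thickening δb (Set.range h₁) :=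
        Metric.mem_thickening_iff.2 ⟨h₁ p.1, ⟨p.1, rfl⟩, d₁⟩
      have m₂ : (g₁ p).1 ∈ Metric.thickening δb (Set.range h₂) := by
        rw [h1]
        exact Metric.mem_thickening_iff.2 ⟨h₂ q.1, ⟨q.1, rfl⟩, d₂⟩
      exact Set.disjoint_left.1 hTb m₁ m₂
    · by_cases hc1 : 1 ≤ ((g₁ p).2 - ε')/(1 - 2*ε')
      · -- collision at the top level
        have hsqp : sq ((g₁ p).2) = 1 := proj_ge _ hc1
        have hsqq : sq ((g₂ q).2) = 1 := by rw [← h2, hsqp]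
        have hs₂ : 1 ≤ ((g₂ q).2 - ε')/(1 - 2*ε') := proj_eq_one hsqq
        have hs₁' : 1 - ε' ≤ (g₁ p).2 := by
          have := (le_div_iff₀ h12).1 hc1
          linarith
        have hs₂' : 1 - ε' ≤ (g₂ q).2 := by
          have := (le_div_iff₀ h12).1 hs₂
          linarith
        have htp : 1 - α/2 ≤ ((p.2 : I) : ℝ) := by
          rcases abs_lt.1 ht₁ with ⟨hl, hr⟩
          linarith
        have htq : 1 - α/2 ≤ ((q.2 : I) : ℝ) := by
          rcases abs_lt.1 ht₂ with ⟨hl, hr⟩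
          linarith
        have e₁ : f₁' p = k₁ p.1 := hf₁'t p htp
        have e₂ : f₂' q = k₂ q.1 := hf₂'t q htq
        have d₁ : dist ((g₁ p).1) (k₁ p.1) < δt := by
          have := hg₁X p
          rw [e₁, dist_comm] at this
          linarith
        have d₂ : dist ((g₂ q).1) (k₂ q.1) < δt := by
          have := hg₂X q
          rw [e₂, dist_comm] at this
          linarith
        have m₁ : (g₁ p).1 ∈ Metric.thickening δt (Set.range k₁) :=
          Metric.mem_thickening_iff.2 ⟨k₁ p.1, ⟨p.1, rfl⟩, d₁⟩
        have m₂ : (g₁ p).1 ∈ Metric.thickening δt (Set.range k₂) := by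
          rw [h1]
          exact Metric.mem_thickening_iff.2 ⟨k₂ q.1, ⟨q.1, rfl⟩, d₂⟩
        exact Set.disjoint_left.1 hTt m₁ m₂
      · -- collision at an intermediate level
        push_neg at hc0 hc1
        have hv₁ : ((sq ((g₁ p).2) : I) : ℝ) = ((g₁ p).2 - ε')/(1 - 2*ε') :=
          proj_mem _ hc0.le hc1.le
        have hval : ((sq ((g₂ q).2) : I) : ℝ) = ((g₁ p).2 - ε')/(1 - 2*ε') := by
          rw [← h2, hv₁]
        have hq0 : 0 < ((g₂ q).2 - ε')/(1 - 2*ε') := by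
          by_contra hcon
          push_neg at hcon
          have h0 : sq ((g₂ q).2) = 0 := proj_le _ hcon
          rw [h0] at hval
          have h00 : ((0:I):ℝ) = 0 := rfl
          rw [h00] at hval
          linarith [hc0]
        have hq1 : ((g₂ q).2 - ε')/(1 - 2*ε') < 1 := by
          by_contra hcon
          push_neg at hcon
          have h0 : sq ((g₂ q).2) = 1 := proj_ge _ hcon
          rw [h0] at hval
          have h00 : ((1:I):ℝ) = 1 := rfl
          rw [h00] at hval
          linarith [hc1]
        have hv₂ : ((sq ((g₂ q).2) : I) : ℝ) = ((g₂ q).2 - ε')/(1 - 2*ε') :=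
          proj_mem _ hq0.le hq1.le
        have heq : ((g₁ p).2 - ε')/(1 - 2*ε') = ((g₂ q).2 - ε')/(1 - 2*ε') := by
          rw [← hv₁, ← hv₂, h2]
        have hs : (g₁ p).2 = (g₂ q).2 := by
          have hmul := congrArg (fun x : ℝ => x * (1 - 2*ε')) heq
          simp only [div_mul_cancel₀ _ h12.ne'] at hmul
          linarith
        have hgg : g₁ p = g₂ q := Prod.ext h1 hs
        have hmem : g₁ p ∈ Set.range g₁ ∩ Set.range g₂ := ⟨⟨p, rfl⟩, ⟨q, hgg.symm⟩⟩
        rw [hgdisj] at hmem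
        exact hmem
  exact ⟨F₁, F₂, hPC₁, hPC₂, hdisjF, hF₁close, hF₂close⟩
end
end

section
/- Let (X, ρ) be a metric space that is an ANR and satisfies the Disjoint Arcs Property. Given continuous maps f₁, f₂ : D × I → X and ε > 0, there exist continuous maps f₁′, f₂′ : D × I → X such that ρ(f_i(p), f_i′(p)) < ε for all p ∈ D × I and f₁′(D × {0,1}) ∩ f₂′(D × {0,1}) = ∅. -/
open unitInterval Topology

noncomputable section

/-! ### Auxiliary material -/

open Set BoundedContinuousFunction

section Aux

variable {X : Type*} [MetricSpace X]

/-- Kuratowski-type embedding of `X` into bounded continuous functions. -/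
def kur (x₀ : X) (x : X) : BoundedContinuousFunction X ℝ :=
  ⟨⟨fun z => dist z x - dist z x₀, by fun_prop⟩, by
    refine ⟨2 * dist x x₀, fun a b => ?_⟩
    have ha : |dist a x - dist a x₀| ≤ dist x x₀ := by
      rw [dist_comm a x, dist_comm a x₀]; exact abs_dist_sub_le x x₀ a
    have hb : |dist b x - dist b x₀| ≤ dist x x₀ := by
      rw [dist_comm b x, dist_comm b x₀]; exact abs_dist_sub_le x x₀ b
    calc dist (dist a x - dist a x₀) (dist b x - dist b x₀)
        ≤ |dist a x - dist a x₀| + |dist b x - dist b x₀| := by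
          rw [Real.dist_eq]; exact (abs_sub _ _)
      _ ≤ 2 * dist x x₀ := by linarith⟩

@[simp] lemma kur_apply (x₀ x z : X) : kur x₀ x z = dist z x - dist z x₀ := rfl

lemma kur_isometry (x₀ : X) : Isometry (kur x₀) := by
  refine Isometry.of_dist_eq fun x y => le_antisymm ?_ ?_
  · rw [BoundedContinuousFunction.dist_le dist_nonneg]
    intro z
    simp only [kur_apply, Real.dist_eq]
    have : dist z x - dist z x₀ - (dist z y - dist z x₀) = dist z x - dist z y := by ring
    rw [this, dist_comm z x, dist_comm z y]
    exact abs_dist_sub_le x y z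
  · have h := dist_coe_le_dist (f := kur x₀ x) (g := kur x₀ y) x
    simp only [kur_apply, Real.dist_eq, dist_self] at h
    have h2 := dist_coe_le_dist (f := kur x₀ x) (g := kur x₀ y) x
    simp only [kur_apply, Real.dist_eq, dist_self, zero_sub] at h2
    calc dist x y = |(-dist x x₀ - (dist x y - dist x x₀))| := by
          rw [show -dist x x₀ - (dist x y - dist x x₀) = -(dist x y) by ring, abs_neg,
            abs_of_nonneg dist_nonneg]
      _ ≤ dist (kur x₀ x) (kur x₀ y) := h2

lemma kur_range_closed_in_conv (x₀ : X) {z : BoundedContinuousFunction X ℝ}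
    (hz : z ∈ convexHull ℝ (range (kur x₀))) (hcl : z ∈ closure (range (kur x₀))) :
    z ∈ range (kur x₀) := by
  obtain ⟨ι, _, w, v, hw0, hw1, hv, hsum⟩ := mem_convexHull_iff_exists_fintype.1 hz
  choose xs hxs using hv
  have key : ∀ x : X, ∑ i, w i * dist x (xs i) ≤ dist z (kur x₀ x) := by
    intro x
    have hzx : z x = ∑ i, w i * (dist x (xs i) - dist x x₀) := by
      rw [← hsum]
      simp only [BoundedContinuousFunction.coe_sum, Finset.sum_apply,
        BoundedContinuousFunction.coe_smul, Pi.smul_apply, smul_eq_mul]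
      refine Finset.sum_congr rfl fun i _ => ?_
      rw [← hxs i]; rfl
    have h1 : z x - (kur x₀ x) x = ∑ i, w i * dist x (xs i) := by
      rw [hzx, kur_apply, dist_self, zero_sub]
      rw [show ∀ a b : ℝ, a - -b = a + b from fun a b => by ring]
      calc (∑ i, w i * (dist x (xs i) - dist x x₀)) + dist x x₀
          = (∑ i, w i * dist x (xs i)) - (∑ i, w i) * dist x x₀ + dist x x₀ := by
            rw [Finset.sum_mul]; rw [← Finset.sum_sub_distrib]; simp only [mul_sub]
        _ = ∑ i, w i * dist x (xs i) := by rw [hw1]; ring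
    calc ∑ i, w i * dist x (xs i) = z x - (kur x₀ x) x := h1.symm
      _ ≤ |z x - (kur x₀ x) x| := le_abs_self _
      _ = dist (z x) ((kur x₀ x) x) := (Real.dist_eq _ _).symm
      _ ≤ dist z (kur x₀ x) := dist_coe_le_dist x
  obtain ⟨i₀, hi₀⟩ : ∃ i, w i ≠ 0 := by
    by_contra hc
    push_neg at hc
    simp [hc] at hw1
  have hwpos : 0 < w i₀ := lt_of_le_of_ne (hw0 i₀) (Ne.symm hi₀)
  have hbound : ∀ x : X, dist z (kur x₀ (xs i₀)) ≤ dist z (kur x₀ x) * (1 + 1 / w i₀) := by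
    intro x
    have h1 : w i₀ * dist x (xs i₀) ≤ dist z (kur x₀ x) := by
      refine le_trans ?_ (key x)
      exact Finset.single_le_sum (fun i _ => mul_nonneg (hw0 i) dist_nonneg) (Finset.mem_univ i₀)
    have h2 : dist x (xs i₀) ≤ dist z (kur x₀ x) / w i₀ := by
      rw [le_div_iff₀ hwpos]; linarith [h1]
    calc dist z (kur x₀ (xs i₀)) ≤ dist z (kur x₀ x) + dist (kur x₀ x) (kur x₀ (xs i₀)) :=
          dist_triangle _ _ _
      _ = dist z (kur x₀ x) + dist x (xs i₀) := by rw [(kur_isometry x₀).dist_eq]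
      _ ≤ dist z (kur x₀ x) + dist z (kur x₀ x) / w i₀ := by linarith
      _ = dist z (kur x₀ x) * (1 + 1 / w i₀) := by ring
  refine ⟨xs i₀, ?_⟩
  symm
  by_contra hne
  set D := dist z (kur x₀ (xs i₀)) with hD
  have hDpos : 0 < D := dist_pos.2 hne
  have hcpos : 0 < 1 + 1 / w i₀ := by positivity
  obtain ⟨y, ⟨x, rfl⟩, hy⟩ := Metric.mem_closure_iff.1 hcl (D / (2 * (1 + 1 / w i₀)))
    (by positivity)
  have := hbound x
  have h3 : dist z (kur x₀ x) * (1 + 1 / w i₀) < (D / (2 * (1 + 1 / w i₀))) * (1 + 1 / w i₀) :=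
    mul_lt_mul_of_pos_right hy hcpos
  have h4 : (D / (2 * (1 + 1 / w i₀))) * (1 + 1 / w i₀) = D / 2 := by field_simp
  linarith


end Aux

section BP

/-- bottom parameter -/
def sigb (d : I) : I := ⟨(d : ℝ) / 3, ⟨div_nonneg d.2.1 (by norm_num), by nlinarith [d.2.2]⟩⟩

/-- top parameter -/
def sigt (d : I) : I := ⟨1 - (d : ℝ) / 3, ⟨by nlinarith [d.2.2], by nlinarith [d.2.1]⟩⟩

lemma continuous_sigb : Continuous sigb :=
  Continuous.subtype_mk (continuous_subtype_val.div_const 3) _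

lemma continuous_sigt : Continuous sigt :=
  Continuous.subtype_mk (continuous_const.sub (continuous_subtype_val.div_const 3)) _

/-- Traversal of bottom, right side, top of the square. -/
def bpath : C(I, I × I) :=
  ⟨fun s => (Set.projIcc (0:ℝ) 1 zero_le_one (min (3 * (s:ℝ)) (min 1 (3 - 3 * (s:ℝ)))),
      Set.projIcc (0:ℝ) 1 zero_le_one (max 0 (min (3 * (s:ℝ) - 1) 1))), by
    apply Continuous.prodMk <;> exact continuous_projIcc.comp (by fun_prop)⟩

lemma bpath_sigb (d : I) : bpath (sigb d) = (d, 0) := by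
  obtain ⟨d, h0, h1⟩ := d
  simp only [bpath, sigb, ContinuousMap.coe_mk]
  refine Prod.ext ?_ ?_ <;> apply Subtype.ext
  · show max 0 (min 1 _) = d
    rw [show 3 * (d / 3) = d by ring]
    simp only [min_def, max_def]
    split_ifs <;> linarith
  · show max 0 (min 1 _) = 0
    rw [show 3 * (d / 3) - 1 = d - 1 by ring]
    simp only [min_def, max_def]
    split_ifs <;> linarith

lemma bpath_sigt (d : I) : bpath (sigt d) = (d, 1) := by
  obtain ⟨d, h0, h1⟩ := d
  simp only [bpath, sigt, ContinuousMap.coe_mk]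
  refine Prod.ext ?_ ?_ <;> apply Subtype.ext
  · show max 0 (min 1 _) = d
    have e1 : 3 * (1 - d / 3) = 3 - d := by ring
    have e2 : 3 - 3 * (1 - d / 3) = d := by ring
    rw [e1]
    simp only [min_def, max_def]
    split_ifs <;> linarith
  · show max 0 (min 1 _) = 1
    rw [show 3 * (1 - d / 3) - 1 = 2 - d by ring]
    simp only [min_def, max_def]
    split_ifs <;> linarith

end BP

section Collar
variable {X : Type*} [MetricSpace X]

lemma collar_exists (x₀ : X) (f : C(I × I, X)) (g : C(I, X)) (δ ε' : ℝ)
    (hδ0 : 0 < δ) (hδ4 : δ ≤ 1/4) (hε' : 0 ≤ ε')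
    (hb : ∀ d : I, dist (f (d, 0)) (g (sigb d)) ≤ ε')
    (ht : ∀ d : I, dist (f (d, 1)) (g (sigt d)) ≤ ε')
    (hub : ∀ (d t : I), (t : ℝ) < δ → dist (f (d, t)) (f (d, 0)) ≤ ε')
    (hut : ∀ (d t : I), 1 - δ < (t : ℝ) → dist (f (d, t)) (f (d, 1)) ≤ ε') :
    ∃ H : C(I × I, BoundedContinuousFunction X ℝ),
      (∀ p, H p ∈ convexHull ℝ (Set.range (kur x₀))) ∧
      (∀ p, dist (H p) (kur x₀ (f p)) ≤ 2 * ε') ∧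
      (∀ d : I, H (d, 0) = kur x₀ (g (sigb d))) ∧
      (∀ d : I, H (d, 1) = kur x₀ (g (sigt d))) := by
  set k := kur x₀ with hk
  set A : I × I → ℝ := fun p => 1 - min 1 ((p.2 : ℝ) / δ) with hA
  set B : I × I → ℝ := fun p => 1 - min 1 ((1 - (p.2 : ℝ)) / δ) with hB
  have hA0 : ∀ p, 0 ≤ A p := fun p => by
    simp only [hA, sub_nonneg]; exact min_le_left _ _
  have hA1 : ∀ p, A p ≤ 1 := fun p => by
    have : (0:ℝ) ≤ min 1 ((p.2 : ℝ) / δ) :=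
      le_min zero_le_one (div_nonneg p.2.2.1 hδ0.le)
    simp only [hA]; linarith
  have hB0 : ∀ p, 0 ≤ B p := fun p => by
    simp only [hB, sub_nonneg]; exact min_le_left _ _
  have hB1 : ∀ p, B p ≤ 1 := fun p => by
    have : (0:ℝ) ≤ min 1 ((1 - (p.2 : ℝ)) / δ) :=
      le_min zero_le_one (div_nonneg (by linarith [p.2.2.2]) hδ0.le)
    simp only [hB]; linarith
  have hAz : ∀ p : I × I, δ ≤ (p.2 : ℝ) → A p = 0 := fun p h => by
    simp only [hA]
    rw [min_eq_left ((one_le_div hδ0).2 h)]; ring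
  have hBz : ∀ p : I × I, (p.2 : ℝ) ≤ 1 - δ → B p = 0 := fun p h => by
    simp only [hB]
    rw [min_eq_left ((one_le_div hδ0).2 (by linarith))]; ring
  have hApos : ∀ p : I × I, A p ≠ 0 → (p.2 : ℝ) < δ := fun p h => by
    by_contra hc; push_neg at hc; exact h (hAz p hc)
  have hBpos : ∀ p : I × I, B p ≠ 0 → 1 - δ < (p.2 : ℝ) := fun p h => by
    by_contra hc; push_neg at hc; exact h (hBz p hc)
  have hone : ∀ p : I × I, A p = 0 ∨ B p = 0 := fun p => by
    rcases le_or_gt (p.2 : ℝ) (1 - δ) with h | h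
    · exact Or.inr (hBz p h)
    · exact Or.inl (hAz p (by linarith))
  set Hf : I × I → BoundedContinuousFunction X ℝ := fun p =>
    k (f p) + A p • (k (g (sigb p.1)) - k (f p)) + B p • (k (g (sigt p.1)) - k (f p))
    with hHf
  have hcont : Continuous Hf := by
    have hck : Continuous k := (kur_isometry x₀).continuous
    have hc1 : Continuous fun p : I × I => k (f p) := hck.comp f.continuous
    have hc2 : Continuous fun p : I × I => k (g (sigb p.1)) :=
      hck.comp (g.continuous.comp (continuous_sigb.comp continuous_fst))
    have hc3 : Continuous fun p : I × I => k (g (sigt p.1)) :=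
      hck.comp (g.continuous.comp (continuous_sigt.comp continuous_fst))
    have hcA : Continuous A := continuous_const.sub
      (continuous_const.min ((continuous_subtype_val.comp continuous_snd).div_const δ))
    have hcB : Continuous B := continuous_const.sub
      (continuous_const.min
        ((continuous_const.sub (continuous_subtype_val.comp continuous_snd)).div_const δ))
    exact (hc1.add (hcA.smul (hc2.sub hc1))).add (hcB.smul (hc3.sub hc1))
  have hmem : ∀ p, Hf p ∈ convexHull ℝ (Set.range k) := by
    intro p
    have hfp : k (f p) ∈ convexHull ℝ (Set.range k) := subset_convexHull ℝ _ ⟨f p, rfl⟩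
    have hgb : k (g (sigb p.1)) ∈ convexHull ℝ (Set.range k) :=
      subset_convexHull ℝ _ ⟨g (sigb p.1), rfl⟩
    have hgt : k (g (sigt p.1)) ∈ convexHull ℝ (Set.range k) :=
      subset_convexHull ℝ _ ⟨g (sigt p.1), rfl⟩
    rcases hone p with h | h
    · have he : Hf p = (1 - B p) • k (f p) + B p • k (g (sigt p.1)) := by
        simp only [hHf, h]; module
      rw [he]
      exact (convex_convexHull ℝ _) hfp hgt (by linarith [hB1 p]) (hB0 p) (by ring)
    · have he : Hf p = (1 - A p) • k (f p) + A p • k (g (sigb p.1)) := by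
        simp only [hHf, h]; module
      rw [he]
      exact (convex_convexHull ℝ _) hfp hgb (by linarith [hA1 p]) (hA0 p) (by ring)
  have hdist : ∀ p, dist (Hf p) (k (f p)) ≤ 2 * ε' := by
    intro p
    rcases hone p with h | h
    · have hE : Hf p - k (f p) = B p • (k (g (sigt p.1)) - k (f p)) := by
        simp only [hHf, h]; module
      have hns := norm_smul (B p) (k (g (sigt p.1)) - k (f p))
      rw [Real.norm_eq_abs, abs_of_nonneg (hB0 p)] at hns
      rw [dist_eq_norm, hE]
      refine le_trans (le_of_eq hns) ?_
      rcases eq_or_ne (B p) 0 with hb0 | hb0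
      · rw [hb0, zero_mul]; positivity
      · have htlt := hBpos p hb0
        have hn : ‖k (g (sigt p.1)) - k (f p)‖ ≤ 2 * ε' := by
          rw [← dist_eq_norm, (kur_isometry x₀).dist_eq, dist_comm]
          calc dist (f p) (g (sigt p.1))
              ≤ dist (f p) (f (p.1, 1)) + dist (f (p.1, 1)) (g (sigt p.1)) := by
                conv_lhs => rw [← Prod.mk.eta (p := p)]
                exact dist_triangle _ _ _
            _ ≤ ε' + ε' := add_le_add (by
                have h' := hut p.1 p.2 htlt
                rwa [Prod.mk.eta] at h') (ht p.1)
            _ = 2 * ε' := by ring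
        calc B p * ‖k (g (sigt p.1)) - k (f p)‖ ≤ 1 * (2 * ε') :=
              mul_le_mul (hB1 p) hn (norm_nonneg _) zero_le_one
          _ = 2 * ε' := by ring
    · have hE : Hf p - k (f p) = A p • (k (g (sigb p.1)) - k (f p)) := by
        simp only [hHf, h]; module
      have hns := norm_smul (A p) (k (g (sigb p.1)) - k (f p))
      rw [Real.norm_eq_abs, abs_of_nonneg (hA0 p)] at hns
      rw [dist_eq_norm, hE]
      refine le_trans (le_of_eq hns) ?_
      rcases eq_or_ne (A p) 0 with ha0 | ha0
      · rw [ha0, zero_mul]; positivity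
      · have htlt := hApos p ha0
        have hn : ‖k (g (sigb p.1)) - k (f p)‖ ≤ 2 * ε' := by
          rw [← dist_eq_norm, (kur_isometry x₀).dist_eq, dist_comm]
          calc dist (f p) (g (sigb p.1))
              ≤ dist (f p) (f (p.1, 0)) + dist (f (p.1, 0)) (g (sigb p.1)) := by
                conv_lhs => rw [← Prod.mk.eta (p := p)]
                exact dist_triangle _ _ _
            _ ≤ ε' + ε' := add_le_add (by
                have h' := hub p.1 p.2 htlt
                rwa [Prod.mk.eta] at h') (hb p.1)
            _ = 2 * ε' := by ring
        calc A p * ‖k (g (sigb p.1)) - k (f p)‖ ≤ 1 * (2 * ε') :=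
              mul_le_mul (hA1 p) hn (norm_nonneg _) zero_le_one
          _ = 2 * ε' := by ring
  refine ⟨⟨Hf, hcont⟩, hmem, hdist, ?_, ?_⟩
  · intro d
    have hc0 : (((0:I)):ℝ) = 0 := rfl
    have hA1' : A (d, (0:I)) = 1 := by
      simp only [hA, hc0, zero_div]
      rw [min_eq_right zero_le_one]; ring
    have hB0' : B (d, (0:I)) = 0 := hBz _ (by rw [hc0]; linarith)
    show Hf (d, 0) = k (g (sigb d))
    simp only [hHf, hA1', hB0']
    module
  · intro d
    have hc1 : (((1:I)):ℝ) = 1 := rfl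
    have hA0' : A (d, (1:I)) = 0 := hAz _ (by rw [hc1]; linarith)
    have hB1' : B (d, (1:I)) = 1 := by
      simp only [hB, hc1, sub_self, zero_div]
      rw [min_eq_right zero_le_one]; ring
    show Hf (d, 1) = k (g (sigt d))
    simp only [hHf, hA0', hB1']
    module

/-- If `X` is a metric ANR with the Disjoint Arcs Property, then any two maps
`f₁, f₂ : D × I → X` can be approximated, arbitrarily closely, by maps `f₁′, f₂′` with
`f₁′(D × {0,1}) ∩ f₂′(D × {0,1}) = ∅`. -/
theorem disjoint_boundary_approx {X : Type u} [MetricSpace X]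
    (hANR : IsANR X) (hDAP : DAP X)
    (f₁ f₂ : C(I × I, X)) (ε : ℝ) (hε : 0 < ε) :
    ∃ f₁' f₂' : C(I × I, X),
      (∀ p, dist (f₁ p) (f₁' p) < ε) ∧ (∀ p, dist (f₂ p) (f₂' p) < ε) ∧
      (⇑f₁' '' {p : I × I | p.2 = 0 ∨ p.2 = 1}) ∩
        (⇑f₂' '' {p : I × I | p.2 = 0 ∨ p.2 = 1}) = ∅ := by
  classical
  set x₀ : X := f₁ (0, 0) with hx₀
  have hXne : Nonempty X := ⟨x₀⟩
  have hkiso : Isometry (kur x₀) := kur_isometry x₀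
  set Zs : Set (BoundedContinuousFunction X ℝ) := convexHull ℝ (Set.range (kur x₀)) with hZs
  set j : X → Zs := fun x => ⟨kur x₀ x, subset_convexHull ℝ _ ⟨x, rfl⟩⟩ with hj
  have hjval : ∀ x, (j x : BoundedContinuousFunction X ℝ) = kur x₀ x := fun x => rfl
  have hjiso : Isometry j := Isometry.of_dist_eq fun x y => by
    rw [Subtype.dist_eq]; exact hkiso.dist_eq x y
  have hjinj : Function.Injective j := hjiso.injective
  have hrange_eq : Set.range j = Subtype.val ⁻¹' (closure (Set.range (kur x₀))) := by
    ext z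
    constructor
    · rintro ⟨x, rfl⟩
      exact subset_closure ⟨x, rfl⟩
    · intro hz
      obtain ⟨x, hx⟩ := kur_range_closed_in_conv x₀ z.2 hz
      exact ⟨x, Subtype.ext hx⟩
  have hjclosed : Topology.IsClosedEmbedding j :=
    ⟨hjiso.isEmbedding, by
      rw [hrange_eq]; exact isClosed_closure.preimage continuous_subtype_val⟩
  obtain ⟨U, hUopen, hUrange, r, hrmem, hrfix⟩ := hANR Zs j hjclosed
  set K : Set Zs := j '' (Set.range f₁ ∪ Set.range f₂) with hK
  have hKcompact : IsCompact K :=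
    (((isCompact_range f₁.continuous).union (isCompact_range f₂.continuous)).image
      hjiso.continuous)
  have hKrange : K ⊆ Set.range j := by rintro z ⟨x, _, rfl⟩; exact ⟨x, rfl⟩
  have hKU : K ⊆ U := hKrange.trans hUrange
  set V : Set Zs := Subtype.val '' {u : U | dist ((r u : Zs)) (u : Zs) < ε / 2} with hV
  have hVopen : IsOpen V := by
    apply (hUopen.isOpenEmbedding_subtypeVal).isOpenMap
    exact isOpen_lt (r.continuous.dist continuous_subtype_val) continuous_const
  have hVU : V ⊆ U := by rintro z ⟨u, _, rfl⟩; exact u.2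
  have hVdist : ∀ z : Zs, z ∈ V → ∀ hz : z ∈ U, dist ((r ⟨z, hz⟩ : Zs)) z < ε / 2 := by
    rintro z ⟨u, hu, rfl⟩ hz
    have he : (⟨(u : Zs), hz⟩ : U) = u := Subtype.ext rfl
    rw [he]; exact hu
  have hKV : K ⊆ V := by
    intro z hz
    have hzU : z ∈ U := hKU hz
    refine ⟨⟨z, hzU⟩, ?_, rfl⟩
    have he : (r ⟨z, hzU⟩ : Zs) = z := hrfix ⟨z, hzU⟩ (hKrange hz)
    simp only [Set.mem_setOf_eq, he, dist_self]
    linarith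
  obtain ⟨δ₁, hδ₁pos, hδ₁⟩ := hKcompact.exists_thickening_subset_open hVopen hKV
  set ε' : ℝ := min (ε / 8) (δ₁ / 4) with hε'def
  have hε'pos : 0 < ε' := lt_min (by linarith) (by linarith)
  have hε'1 : ε' ≤ ε / 8 := min_le_left _ _
  have hε'2 : ε' ≤ δ₁ / 4 := min_le_right _ _
  obtain ⟨δa, hδa, hδa'⟩ := Metric.uniformContinuous_iff.1
    (CompactSpace.uniformContinuous_of_continuous f₁.continuous) ε' hε'pos
  obtain ⟨δb, hδb, hδb'⟩ := Metric.uniformContinuous_iff.1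
    (CompactSpace.uniformContinuous_of_continuous f₂.continuous) ε' hε'pos
  set δ : ℝ := min (min δa δb) (1/4) with hδdef
  have hδpos : 0 < δ := lt_min (lt_min hδa hδb) (by norm_num)
  have hδ4 : δ ≤ 1/4 := min_le_right _ _
  have hδa2 : δ ≤ δa := (min_le_left _ _).trans (min_le_left _ _)
  have hδb2 : δ ≤ δb := (min_le_left _ _).trans (min_le_right _ _)
  obtain ⟨g₁, g₂, hg₁, hg₂, hgdisj⟩ := hDAP (f₁.comp bpath) (f₂.comp bpath) ε' hε'pos
  -- distance facts feeding the collar lemma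
  have hdist_bot : ∀ (d t : I), (t : ℝ) < δ → dist ((d, t) : I × I) (d, 0) < δ := by
    intro d t htlt
    rw [Prod.dist_eq]
    have h2 : dist t (0 : I) = (t : ℝ) := by
      rw [Subtype.dist_eq, Real.dist_eq]
      norm_num [abs_of_nonneg t.2.1]
    rw [dist_self, h2, max_eq_right t.2.1]
    exact htlt
  have hdist_top : ∀ (d t : I), 1 - δ < (t : ℝ) → dist ((d, t) : I × I) (d, 1) < δ := by
    intro d t htlt
    rw [Prod.dist_eq]
    have h2 : dist t (1 : I) = 1 - (t : ℝ) := by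
      rw [Subtype.dist_eq, Real.dist_eq, show (((1:I)):ℝ) = 1 from rfl,
        abs_of_nonpos (by linarith [t.2.2])]
      ring
    rw [dist_self, h2, max_eq_right (by linarith [t.2.2])]
    linarith
  have hcol : ∀ (f : C(I × I, X)) (g : C(I, X)) (δc : ℝ),
      δ ≤ δc → (∀ a b : I × I, dist a b < δc → dist (f a) (f b) < ε') →
      (∀ s, dist ((f.comp bpath) s) (g s) < ε') →
      ∃ H : C(I × I, BoundedContinuousFunction X ℝ),
        (∀ p, H p ∈ convexHull ℝ (Set.range (kur x₀))) ∧
        (∀ p, dist (H p) (kur x₀ (f p)) ≤ 2 * ε') ∧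
        (∀ d : I, H (d, 0) = kur x₀ (g (sigb d))) ∧
        (∀ d : I, H (d, 1) = kur x₀ (g (sigt d))) := by
    intro f g δc hδc hfc hg
    refine collar_exists x₀ f g δ ε' hδpos hδ4 hε'pos.le ?_ ?_ ?_ ?_
    · intro d
      have := hg (sigb d)
      rw [ContinuousMap.comp_apply, bpath_sigb] at this
      exact this.le
    · intro d
      have := hg (sigt d)
      rw [ContinuousMap.comp_apply, bpath_sigt] at this
      exact this.le
    · intro d t htlt
      exact (hfc _ _ ((hdist_bot d t htlt).trans_le hδc)).le
    · intro d t htlt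
      exact (hfc _ _ ((hdist_top d t htlt).trans_le hδc)).le
  obtain ⟨H₁, hH₁mem, hH₁dist, hH₁bot, hH₁top⟩ :=
    hcol f₁ g₁ δa hδa2 (fun a b h => hδa' h) hg₁
  obtain ⟨H₂, hH₂mem, hH₂dist, hH₂bot, hH₂top⟩ :=
    hcol f₂ g₂ δb hδb2 (fun a b h => hδb' h) hg₂
  -- package everything into the final maps
  have main : ∀ (f : C(I × I, X)) (g : C(I, X))
      (H : C(I × I, BoundedContinuousFunction X ℝ))
      (hHmem : ∀ p, H p ∈ convexHull ℝ (Set.range (kur x₀)))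
      (hHdist : ∀ p, dist (H p) (kur x₀ (f p)) ≤ 2 * ε')
      (hHbot : ∀ d : I, H (d, 0) = kur x₀ (g (sigb d)))
      (hHtop : ∀ d : I, H (d, 1) = kur x₀ (g (sigt d)))
      (hfK : ∀ p, j (f p) ∈ K),
      ∃ f' : C(I × I, X), (∀ p, dist (f p) (f' p) < ε) ∧
        (∀ d : I, f' (d, 0) = g (sigb d)) ∧ (∀ d : I, f' (d, 1) = g (sigt d)) := by
    intro f g H hHmem hHdist hHbot hHtop hfK
    set Hz : I × I → Zs := fun p => ⟨H p, hHmem p⟩ with hHz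
    have hHzc : Continuous Hz := H.continuous.subtype_mk _
    have hHzdist : ∀ p, dist (Hz p) (j (f p)) ≤ 2 * ε' := fun p => hHdist p
    have hHzV : ∀ p, Hz p ∈ V := by
      intro p
      apply hδ₁
      rw [Metric.mem_thickening_iff]
      exact ⟨j (f p), hfK p, lt_of_le_of_lt (hHzdist p) (by linarith)⟩
    have hHzU : ∀ p, Hz p ∈ U := fun p => hVU (hHzV p)
    set F : I × I → Zs := fun p => r ⟨Hz p, hHzU p⟩ with hF
    have hFc : Continuous F := r.continuous.comp (hHzc.subtype_mk _)
    set f' : I × I → X := fun p => Function.invFun j (F p) with hf'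
    have hjf' : ∀ p, j (f' p) = F p := fun p => Function.invFun_eq (hrmem _)
    have hf'c : Continuous f' := by
      rw [hjiso.isEmbedding.continuous_iff (g := j)]
      have : (fun p => j (f' p)) = F := funext hjf'
      rw [show j ∘ f' = F from funext hjf']
      exact hFc
    refine ⟨⟨f', hf'c⟩, ?_, ?_, ?_⟩
    · intro p
      have h1 : dist (j (f p)) (j (f' p)) < ε := by
        rw [hjf' p]
        calc dist (j (f p)) (F p) ≤ dist (j (f p)) (Hz p) + dist (Hz p) (F p) :=
              dist_triangle _ _ _
          _ < ε := by
            have ha : dist (j (f p)) (Hz p) ≤ 2 * ε' := by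
              rw [dist_comm]; exact hHzdist p
            have hb : dist (Hz p) (F p) < ε / 2 := by
              rw [dist_comm]
              exact hVdist (Hz p) (hHzV p) (hHzU p)
            have : 2 * ε' ≤ ε / 4 := by linarith
            linarith
      rwa [hjiso.dist_eq] at h1
    · intro d
      have hz : Hz (d, 0) = j (g (sigb d)) := Subtype.ext (hHbot d)
      have hr : F (d, 0) = j (g (sigb d)) := by
        have hmem' : (((⟨Hz (d, 0), hHzU (d, 0)⟩ : U)) : Zs) ∈ Set.range j := by
          show Hz (d, 0) ∈ Set.range j
          rw [hz]; exact Set.mem_range_self _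
        exact (hrfix _ hmem').trans hz
      apply hjinj
      show j (f' (d, 0)) = j (g (sigb d))
      rw [hjf' (d, 0)]
      exact hr
    · intro d
      have hz : Hz (d, 1) = j (g (sigt d)) := Subtype.ext (hHtop d)
      have hr : F (d, 1) = j (g (sigt d)) := by
        have hmem' : (((⟨Hz (d, 1), hHzU (d, 1)⟩ : U)) : Zs) ∈ Set.range j := by
          show Hz (d, 1) ∈ Set.range j
          rw [hz]; exact Set.mem_range_self _
        exact (hrfix _ hmem').trans hz
      apply hjinj
      show j (f' (d, 1)) = j (g (sigt d))
      rw [hjf' (d, 1)]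
      exact hr
  obtain ⟨f₁', hf₁'dist, hf₁'bot, hf₁'top⟩ :=
    main f₁ g₁ H₁ hH₁mem hH₁dist hH₁bot hH₁top
      (fun p => ⟨f₁ p, Or.inl ⟨p, rfl⟩, rfl⟩)
  obtain ⟨f₂', hf₂'dist, hf₂'bot, hf₂'top⟩ :=
    main f₂ g₂ H₂ hH₂mem hH₂dist hH₂bot hH₂top
      (fun p => ⟨f₂ p, Or.inr ⟨p, rfl⟩, rfl⟩)
  refine ⟨f₁', f₂', hf₁'dist, hf₂'dist, ?_⟩
  rw [Set.eq_empty_iff_forall_notMem]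
  rintro x ⟨⟨p, hp, hpx⟩, ⟨q, hq, hqx⟩⟩
  have hx1 : x ∈ Set.range g₁ := by
    rcases hp with h0 | h1
    · refine ⟨sigb p.1, ?_⟩
      rw [← hpx, show p = (p.1, (0:I)) from by rw [← h0], hf₁'bot p.1]
    · refine ⟨sigt p.1, ?_⟩
      rw [← hpx, show p = (p.1, (1:I)) from by rw [← h1], hf₁'top p.1]
  have hx2 : x ∈ Set.range g₂ := by
    rcases hq with h0 | h1
    · refine ⟨sigb q.1, ?_⟩
      rw [← hqx, show q = (q.1, (0:I)) from by rw [← h0], hf₂'bot q.1]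
    · refine ⟨sigt q.1, ?_⟩
      rw [← hqx, show q = (q.1, (1:I)) from by rw [← h1], hf₂'top q.1]
  rw [Set.eq_empty_iff_forall_notMem] at hgdisj
  exact hgdisj x ⟨hx1, hx2⟩
end Collar
end
end

section
/- Let (X, ρ) be a metric space that is an ANR and satisfies the Disjoint Arcs Property. Let f₁, f₂ : D × I → X × I be level-preserving continuous maps, let t₀ < t₁ < … < t_m be finitely many points of I, and let ε > 0. Then there exist level-preserving continuous maps g₁, g₂ : D × I → X × I such that ρ̃(f_i(p), g_i(p)) < ε for all p ∈ D × I and g₁(D × {t_k}) ∩ g₂(D × {t_k}) = ∅ for every k = 0, 1, …, m. -/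
open unitInterval Topology

noncomputable section

/-- A map `f : D × I → X × I` is level preserving if `f(D × {t}) ⊆ X × {t}`
for every `t ∈ I`. -/
def IsLevelPreserving {X : Type*} [TopologicalSpace X] (f : C(I × I, X × I)) : Prop :=
  ∀ (d t : I), (f (d, t)).2 = t

namespace DFLAux

open Set BoundedContinuousFunction

variable {X : Type u} [MetricSpace X]

def kur (x₀ : X) (x : X) : X →ᵇ ℝ :=
  BoundedContinuousFunction.mkOfBound
    ⟨fun y => dist x y - dist x₀ y, by fun_prop⟩ (2 * dist x x₀)
    (by
      intro y z
      rw [Real.dist_eq]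
      have h1 : |dist x y - dist x₀ y| ≤ dist x x₀ := abs_dist_sub_le x x₀ y
      have h2 : |dist x z - dist x₀ z| ≤ dist x x₀ := abs_dist_sub_le x x₀ z
      calc |(dist x y - dist x₀ y) - (dist x z - dist x₀ z)|
          ≤ |dist x y - dist x₀ y| + |dist x z - dist x₀ z| := abs_sub _ _
        _ ≤ dist x x₀ + dist x x₀ := add_le_add h1 h2
        _ = 2 * dist x x₀ := by ring)

lemma kur_apply (x₀ x y : X) : kur x₀ x y = dist x y - dist x₀ y := rfl

lemma isometry_kur (x₀ : X) : Isometry (kur x₀) := by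
  apply Isometry.of_dist_eq
  intro a b
  apply le_antisymm
  · refine (BoundedContinuousFunction.dist_le dist_nonneg).2 fun y => ?_
    rw [Real.dist_eq, kur_apply, kur_apply]
    have : (dist a y - dist x₀ y) - (dist b y - dist x₀ y) = dist a y - dist b y := by ring
    rw [this]
    exact abs_dist_sub_le a b y
  · have := BoundedContinuousFunction.dist_coe_le_dist (f := kur x₀ a) (g := kur x₀ b) b
    rw [Real.dist_eq, kur_apply, kur_apply] at this
    have e : (dist a b - dist x₀ b) - (dist b b - dist x₀ b) = dist a b := by
      simp [dist_self]
    rw [e, abs_of_nonneg dist_nonneg] at this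
    exact this

lemma wojdyslawski (x₀ : X) {z : X →ᵇ ℝ}
    (hz1 : z ∈ closure (Set.range (kur x₀)))
    (hz2 : z ∈ convexHull ℝ (Set.range (kur x₀))) :
    z ∈ Set.range (kur x₀) := by
  haveI : Nonempty X := ⟨x₀⟩
  rw [convexHull_eq] at hz2
  obtain ⟨ι, s, w, zf, hw0, hw1, hzs, hcm⟩ := hz2
  obtain ⟨i₀, hi₀s, hwi₀⟩ := Finset.exists_ne_zero_of_sum_ne_zero
    (by rw [hw1]; exact one_ne_zero)
  have hwpos : 0 < w i₀ := lt_of_le_of_ne (hw0 i₀ hi₀s) (Ne.symm hwi₀)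
  set y : ι → X := fun i => Function.invFun (kur x₀) (zf i) with hy_def
  have hy : ∀ i ∈ s, kur x₀ (y i) = zf i := fun i hi => Function.invFun_eq (hzs i hi)
  -- evaluation formula
  have hzx : ∀ x : X, z x = (∑ i ∈ s, w i * dist (y i) x) - dist x₀ x := by
    intro x
    have h1 : z = ∑ i ∈ s, w i • zf i := by
      rw [← hcm, Finset.centerMass_eq_of_sum_1 _ _ hw1]
    have h2 : z x = ∑ i ∈ s, w i * (zf i x) := by
      rw [h1, BoundedContinuousFunction.coe_sum, Finset.sum_apply]
      simp [BoundedContinuousFunction.smul_apply, smul_eq_mul]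
    rw [h2]
    have h3 : ∀ i ∈ s, w i * (zf i x) = w i * dist (y i) x - w i * dist x₀ x := by
      intro i hi
      rw [← hy i hi, kur_apply]
      ring
    rw [Finset.sum_congr rfl h3, Finset.sum_sub_distrib, ← Finset.sum_mul, hw1, one_mul]
  -- show z = kur x₀ (y i₀)
  refine ⟨y i₀, ?_⟩
  have hd : dist (kur x₀ (y i₀)) z ≤ 0 := by
    apply le_of_forall_pos_le_add
    intro ε hε
    set ε' : ℝ := min (ε / 2) (ε * w i₀ / 2) with hε'_def
    have hε' : 0 < ε' := lt_min (by linarith) (by positivity)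
    obtain ⟨b, ⟨x, rfl⟩, hb⟩ := Metric.mem_closure_iff.1 hz1 ε' hε'
    -- evaluate at x
    have hevx : |z x - kur x₀ x x| < ε' := by
      have := BoundedContinuousFunction.dist_coe_le_dist (f := z) (g := kur x₀ x) x
      rw [Real.dist_eq] at this
      exact lt_of_le_of_lt this hb
    have hxx : kur x₀ x x = 0 - dist x₀ x := by rw [kur_apply]; simp [dist_self]
    rw [hzx x, hxx] at hevx
    have hsum : |∑ i ∈ s, w i * dist (y i) x| < ε' := by
      convert hevx using 2; ring
    have hterm : w i₀ * dist (y i₀) x ≤ ∑ i ∈ s, w i * dist (y i) x := by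
      apply Finset.single_le_sum (f := fun i => w i * dist (y i) x)
        (fun i hi => mul_nonneg (hw0 i hi) dist_nonneg) hi₀s
    have hsum' : ∑ i ∈ s, w i * dist (y i) x < ε' :=
      lt_of_le_of_lt (le_abs_self _) hsum
    have hdyx : dist (y i₀) x < ε' / w i₀ := by
      rw [lt_div_iff₀ hwpos]
      calc dist (y i₀) x * w i₀ = w i₀ * dist (y i₀) x := by ring
        _ ≤ _ := hterm
        _ < ε' := hsum'
    have h1 : dist (kur x₀ (y i₀)) (kur x₀ x) = dist (y i₀) x := (isometry_kur x₀).dist_eq _ _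
    refine le_of_lt ?_
    calc dist (kur x₀ (y i₀)) z ≤ dist (kur x₀ (y i₀)) (kur x₀ x) + dist (kur x₀ x) z :=
          dist_triangle _ _ _
      _ = dist (y i₀) x + dist z (kur x₀ x) := by rw [h1, dist_comm (kur x₀ x) z]
      _ < ε' / w i₀ + ε' := add_lt_add hdyx hb
      _ ≤ ε / 2 + ε / 2 := by
          apply add_le_add
          · rw [div_le_iff₀ hwpos]
            calc ε' ≤ ε * w i₀ / 2 := min_le_right _ _
              _ = ε / 2 * w i₀ := by ring
          · exact min_le_left _ _
      _ = 0 + ε := by ring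
  have := dist_le_zero.1 hd
  exact this


set_option maxHeartbeats 1000000 in
lemma key (hANR : IsANR X) (x₀ : X) (K : Set X) (hK : IsCompact K) (hKne : K.Nonempty)
    (ε : ℝ) (hε : 0 < ε) :
    ∃ δ > 0, ∀ a b : C(I, X), (∀ d, a d ∈ K) → (∀ d, dist (a d) (b d) < δ) →
      ∃ h : C(I × I, X), (∀ d, h (d, 0) = a d) ∧ (∀ d, h (d, 1) = b d) ∧
        ∀ d s, dist (h (d, s)) (a d) < ε := by
  haveI : Nonempty X := ⟨x₀⟩
  set S : Set (X →ᵇ ℝ) := Set.range (kur x₀) with hS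
  set Z := ↥(convexHull ℝ S) with hZ
  set j : X → Z := fun x => ⟨kur x₀ x, subset_convexHull ℝ S (Set.mem_range_self x)⟩ with hj
  have hjiso : Isometry j := by
    apply Isometry.of_dist_eq
    intro a b
    rw [Subtype.dist_eq]
    exact (isometry_kur x₀).dist_eq a b
  have hrange_closed : IsClosed (Set.range j) := by
    have heq : Set.range j = Subtype.val ⁻¹' (closure S) := by
      ext z
      constructor
      · rintro ⟨x, rfl⟩
        exact subset_closure (Set.mem_range_self x)
      · intro hz
        obtain ⟨x, hx⟩ := wojdyslawski x₀ hz z.2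
        exact ⟨x, Subtype.ext hx⟩
    rw [heq]
    exact isClosed_closure.preimage continuous_subtype_val
  have hce : Topology.IsClosedEmbedding j := ⟨hjiso.isEmbedding, hrange_closed⟩
  obtain ⟨U, hUopen, hUrange, r, hr1, hr2⟩ := hANR Z j hce
  -- control of the retraction near the compact set j '' K
  have claim : ∀ ε₀ > (0:ℝ), ∃ δ' > 0, ∀ z : Z, (∃ p ∈ j '' K, dist z p < δ') →
      z ∈ U ∧ ∀ hz : z ∈ U, dist ((r ⟨z, hz⟩ : Z)) z < ε₀ := by
    intro ε₀ hε₀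
    set K₀ : Set Z := j '' K with hK₀def
    have hK₀ : IsCompact K₀ := hK.image hjiso.continuous
    have hK₀sub : K₀ ⊆ Set.range j := Set.image_subset_range _ _
    have hch : ∀ p : Z, ∃ η > (0:ℝ), p ∈ K₀ →
        (Metric.ball p η ⊆ U ∧ η ≤ ε₀ / 3 ∧
          ∀ z : Z, ∀ hz : z ∈ U, dist z p < η →
            dist ((r ⟨z, hz⟩ : Z)) p < ε₀ / 3) := by
      intro p
      by_cases hp : p ∈ K₀
      · have hpU : p ∈ U := hUrange (hK₀sub hp)
        obtain ⟨ρ, hρ, hball⟩ := Metric.isOpen_iff.1 hUopen p hpU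
        have hcont := Metric.continuous_iff.1 r.continuous ⟨p, hpU⟩ (ε₀ / 3) (by positivity)
        obtain ⟨δp, hδp, hδp'⟩ := hcont
        refine ⟨min (min δp ρ) (ε₀ / 3), by positivity, fun _ => ⟨?_, ?_, ?_⟩⟩
        · refine subset_trans (Metric.ball_subset_ball ?_) hball
          exact le_trans (min_le_left _ _) (min_le_right _ _)
        · exact min_le_right _ _
        · intro z hz hdzp
          have h1 : dist (⟨z, hz⟩ : U) ⟨p, hpU⟩ < δp := by
            rw [Subtype.dist_eq]
            exact lt_of_lt_of_le hdzp (le_trans (min_le_left _ _) (min_le_left _ _))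
          have h2 := hδp' _ h1
          have h3 : r ⟨p, hpU⟩ = p := hr2 ⟨p, hpU⟩ (hK₀sub hp)
          rwa [h3] at h2
      · exact ⟨1, one_pos, fun h => absurd h hp⟩
    choose η hη0 hηP using hch
    obtain ⟨T, hTK₀, hTcov⟩ := hK₀.elim_nhds_subcover (fun p => Metric.ball p (η p / 2))
      (fun p hp => Metric.ball_mem_nhds p (by have := hη0 p; positivity))
    have hTne : T.Nonempty := by
      obtain ⟨x, hx⟩ := hKne
      have : j x ∈ K₀ := Set.mem_image_of_mem _ hx
      have := hTcov this
      rw [Set.mem_iUnion₂] at this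
      obtain ⟨q, hq, _⟩ := this
      exact ⟨q, hq⟩
    set δ' : ℝ := T.inf' hTne (fun p => η p / 2) with hδ'def
    have hδ'pos : 0 < δ' := by
      rw [hδ'def]
      apply Finset.lt_inf'_iff hTne (a := 0) |>.2
      intro p hp
      have := hη0 p; positivity
    refine ⟨δ', hδ'pos, ?_⟩
    rintro z ⟨p, hpK₀, hzp⟩
    have hpcov := hTcov hpK₀
    rw [Set.mem_iUnion₂] at hpcov
    obtain ⟨q, hqT, hpq⟩ := hpcov
    have hqK₀ : q ∈ K₀ := hTK₀ q hqT
    obtain ⟨hballq, hηq3, hrq⟩ := hηP q hqK₀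
    have hδ'le : δ' ≤ η q / 2 := Finset.inf'_le _ hqT
    have hzq : dist z q < η q := by
      have h1 : dist p q < η q / 2 := hpq
      calc dist z q ≤ dist z p + dist p q := dist_triangle _ _ _
        _ < δ' + η q / 2 := add_lt_add hzp h1
        _ ≤ η q / 2 + η q / 2 := by linarith
        _ = η q := by ring
    have hzU : z ∈ U := hballq hzq
    refine ⟨hzU, fun hz => ?_⟩
    calc dist ((r ⟨z, hz⟩ : Z)) z ≤ dist ((r ⟨z, hz⟩ : Z)) q + dist q z := dist_triangle _ _ _
      _ < ε₀ / 3 + η q := add_lt_add (hrq z hz hzq) (by rw [dist_comm]; exact hzq)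
      _ ≤ ε₀ / 3 + ε₀ / 3 := by linarith
      _ < ε₀ := by linarith
  obtain ⟨δ', hδ'pos, hδ'spec⟩ := claim (ε / 3) (by positivity)
  refine ⟨min δ' (ε / 3), by positivity, ?_⟩
  intro a b ha hab
  have hmem : ∀ p : I × I, (1 - (p.2 : ℝ)) • kur x₀ (a p.1) + (p.2 : ℝ) • kur x₀ (b p.1)
      ∈ convexHull ℝ S :=
    fun p => (convex_convexHull ℝ S)
      (subset_convexHull ℝ S ⟨_, rfl⟩) (subset_convexHull ℝ S ⟨_, rfl⟩)
      (by have := p.2.2.2; linarith) p.2.2.1 (by ring)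
  set P : I × I → Z := fun p => ⟨_, hmem p⟩ with hPdef
  have hPcont : Continuous P := by
    apply Continuous.subtype_mk
    apply Continuous.add
    · exact (continuous_const.sub (continuous_subtype_val.comp continuous_snd)).smul
        ((isometry_kur x₀).continuous.comp (a.continuous.comp continuous_fst))
    · exact (continuous_subtype_val.comp continuous_snd).smul
        ((isometry_kur x₀).continuous.comp (b.continuous.comp continuous_fst))
  have hPdist : ∀ p : I × I, dist (P p) (j (a p.1)) < min δ' (ε / 3) := by
    intro p
    rw [Subtype.dist_eq]
    have hle : dist (P p : X →ᵇ ℝ) ((j (a p.1) : Z) : X →ᵇ ℝ) ≤ dist (a p.1) (b p.1) := by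
      refine (BoundedContinuousFunction.dist_le dist_nonneg).2 fun y => ?_
      show dist (((1 - (p.2 : ℝ)) • kur x₀ (a p.1) + (p.2 : ℝ) • kur x₀ (b p.1)) y)
        ((kur x₀ (a p.1)) y) ≤ _
      rw [BoundedContinuousFunction.add_apply, BoundedContinuousFunction.smul_apply,
        BoundedContinuousFunction.smul_apply, Real.dist_eq]
      have hy : |kur x₀ (b p.1) y - kur x₀ (a p.1) y| ≤ dist (a p.1) (b p.1) := by
        have h0 := BoundedContinuousFunction.dist_coe_le_dist
          (f := kur x₀ (b p.1)) (g := kur x₀ (a p.1)) y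
        rw [Real.dist_eq] at h0
        calc |kur x₀ (b p.1) y - kur x₀ (a p.1) y|
            ≤ dist (kur x₀ (b p.1)) (kur x₀ (a p.1)) := h0
          _ = dist (b p.1) (a p.1) := (isometry_kur x₀).dist_eq _ _
          _ = dist (a p.1) (b p.1) := dist_comm _ _
      have he : (1 - (p.2 : ℝ)) • (kur x₀ (a p.1) y) + (p.2 : ℝ) • (kur x₀ (b p.1) y)
          - kur x₀ (a p.1) y = (p.2 : ℝ) * (kur x₀ (b p.1) y - kur x₀ (a p.1) y) := by
        simp only [smul_eq_mul]; ring
      rw [he, abs_mul]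
      calc |(p.2 : ℝ)| * |kur x₀ (b p.1) y - kur x₀ (a p.1) y|
          ≤ 1 * |kur x₀ (b p.1) y - kur x₀ (a p.1) y| := by
            apply mul_le_mul_of_nonneg_right _ (abs_nonneg _)
            rw [abs_of_nonneg p.2.2.1]; exact p.2.2.2
        _ = |kur x₀ (b p.1) y - kur x₀ (a p.1) y| := one_mul _
        _ ≤ dist (a p.1) (b p.1) := hy
    exact lt_of_le_of_lt hle (hab p.1)
  have hPspec : ∀ p : I × I, P p ∈ U ∧
      ∀ hz : P p ∈ U, dist ((r ⟨P p, hz⟩ : Z)) (P p) < ε / 3 := by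
    intro p
    exact hδ'spec (P p) ⟨j (a p.1), Set.mem_image_of_mem _ (ha p.1),
      lt_of_lt_of_le (hPdist p) (min_le_left _ _)⟩
  set G : I × I → Z := fun p => (r ⟨P p, (hPspec p).1⟩ : Z) with hGdef
  have hGrange : ∀ p, G p ∈ Set.range j := fun p => hr1 _
  have hGcont : Continuous G := by
    exact r.continuous.comp (hPcont.subtype_mk fun p => (hPspec p).1)
  set F : I × I → X := fun p => Function.invFun j (G p) with hFdef
  have hjF : ∀ p, j (F p) = G p := fun p => Function.invFun_eq (hGrange p)
  have hFcont : Continuous F := by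
    rw [Metric.continuous_iff]
    intro p ε₁ hε₁
    obtain ⟨δ₁, hδ₁, hδ₁'⟩ := Metric.continuous_iff.1 hGcont p ε₁ hε₁
    refine ⟨δ₁, hδ₁, fun q hq => ?_⟩
    have := hδ₁' q hq
    rwa [← hjF q, ← hjF p, hjiso.dist_eq] at this
  have hPj : ∀ (d : I) (c : I) (x : X), ((c : ℝ) = 0 → a d = x) → ((c : ℝ) = 1 → b d = x) →
      ((c : ℝ) = 0 ∨ (c : ℝ) = 1) → P (d, c) = j x := by
    rintro d c x h0 h1 (hc | hc) <;> apply Subtype.ext <;>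
      · show (1 - (c : ℝ)) • kur x₀ (a d) + (c : ℝ) • kur x₀ (b d) = kur x₀ x
        first
          | rw [← h0 hc, hc]; module
          | rw [← h1 hc, hc]; module
  have hFend : ∀ (d : I) (c : I) (x : X), P (d, c) = j x → F (d, c) = x := by
    intro d c x hPx
    have hU' : j x ∈ U := hUrange ⟨x, rfl⟩
    have h1 : (⟨P (d, c), (hPspec (d, c)).1⟩ : U) = ⟨j x, hU'⟩ := Subtype.ext hPx
    have h2 : G (d, c) = j x := by
      show (r ⟨P (d, c), (hPspec (d, c)).1⟩ : Z) = j x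
      rw [h1]
      exact hr2 ⟨j x, hU'⟩ ⟨x, rfl⟩
    show Function.invFun j (G (d, c)) = x
    rw [h2]
    exact Function.leftInverse_invFun hjiso.injective x
  refine ⟨⟨F, hFcont⟩, ?_, ?_, ?_⟩
  · intro d
    exact hFend d 0 (a d) (hPj d 0 (a d) (fun _ => rfl) (by simp) (Or.inl (by simp))) 
  · intro d
    exact hFend d 1 (b d) (hPj d 1 (b d) (by simp) (fun _ => rfl) (Or.inr (by simp)))
  · intro d s
    show dist (F (d, s)) (a d) < ε
    rw [← hjiso.dist_eq, hjF]
    calc dist (G (d, s)) (j (a d))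
        ≤ dist (G (d, s)) (P (d, s)) + dist (P (d, s)) (j (a d)) := dist_triangle _ _ _
      _ < ε / 3 + min δ' (ε / 3) :=
          add_lt_add ((hPspec (d, s)).2 _) (hPdist (d, s))
      _ ≤ ε / 3 + ε / 3 := by
          have := min_le_right δ' (ε / 3); linarith
      _ < ε := by linarith


/-- Glue strip modifications `H k` (supported on `|s - t k| ≤ δt`) onto a base map `b`. -/
def stripGlue {n : ℕ} (t : Fin n → I) (δt : ℝ) (H : Fin n → I × I → X) (b : I × I → X) :
    List (Fin n) → I × I → X
  | [], p => b p
  | k :: l, p => if |(p.2 : ℝ) - (t k : ℝ)| ≤ δt then H k p else stripGlue t δt H b l p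

lemma stripGlue_spec {n : ℕ} (t : Fin n → I) (δt : ℝ) (hδt : 0 < δt)
    (sep : ∀ k l : Fin n, k ≠ l → 3 * δt ≤ |(t k : ℝ) - (t l : ℝ)|)
    (b : I × I → X) (hb : Continuous b)
    (H : Fin n → I × I → X) (hH : ∀ k, Continuous (H k))
    (hHb : ∀ (k : Fin n) (p : I × I), |(p.2 : ℝ) - (t k : ℝ)| = δt → H k p = b p)
    (l : List (Fin n)) (hl : l.Nodup) :
    Continuous (stripGlue t δt H b l) ∧
    (∀ p, (∀ k ∈ l, ¬(|(p.2 : ℝ) - (t k : ℝ)| ≤ δt)) → stripGlue t δt H b l p = b p) ∧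
    (∀ k ∈ l, ∀ d : I, stripGlue t δt H b l (d, t k) = H k (d, t k)) ∧
    (∀ p, stripGlue t δt H b l p = b p ∨
      ∃ k, |(p.2 : ℝ) - (t k : ℝ)| ≤ δt ∧ stripGlue t δt H b l p = H k p) := by
  induction l with
  | nil => exact ⟨hb, fun _ _ => rfl, fun k hk => absurd hk List.not_mem_nil, fun p => Or.inl rfl⟩
  | cons k₀ l ih =>
    obtain ⟨hk₀l, hlnd⟩ := List.nodup_cons.1 hl
    obtain ⟨ihc, ihout, ihlev, ihcase⟩ := ih hlnd
    have hfar : ∀ (x : I × I) (k : Fin n), k ∈ l → |(x.2 : ℝ) - (t k₀ : ℝ)| = δt →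
        ¬(|(x.2 : ℝ) - (t k : ℝ)| ≤ δt) := by
      intro x k hkl hbd
      have hkk₀ : k ≠ k₀ := fun h => hk₀l (h ▸ hkl)
      have h3 := sep k k₀ hkk₀
      intro hle
      have : |(t k : ℝ) - (t k₀ : ℝ)| ≤ |(x.2 : ℝ) - (t k : ℝ)| + |(x.2 : ℝ) - (t k₀ : ℝ)| := by
        calc |(t k : ℝ) - (t k₀ : ℝ)| = |((x.2 : ℝ) - (t k₀ : ℝ)) - ((x.2 : ℝ) - (t k : ℝ))| := by
              ring_nf
          _ ≤ |(x.2 : ℝ) - (t k₀ : ℝ)| + |(x.2 : ℝ) - (t k : ℝ)| := abs_sub _ _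
          _ = _ := add_comm _ _
      linarith
    have hglue : ∀ x : I × I, |(x.2 : ℝ) - (t k₀ : ℝ)| = δt →
        H k₀ x = stripGlue t δt H b l x := by
      intro x hx
      rw [hHb k₀ x hx, ihout x (fun k hk => hfar x k hk hx)]
    refine ⟨?_, ?_, ?_, ?_⟩
    · show Continuous fun p => if |(p.2 : ℝ) - (t k₀ : ℝ)| ≤ δt then H k₀ p
        else stripGlue t δt H b l p
      exact Continuous.if_le (hH k₀) ihc
        (by fun_prop) continuous_const (fun x hx => hglue x hx)
    · intro p hp
      show (if |(p.2 : ℝ) - (t k₀ : ℝ)| ≤ δt then H k₀ p else stripGlue t δt H b l p) = b p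
      rw [if_neg (hp k₀ (List.mem_cons_self (a := k₀) (l := l)))]
      exact ihout p (fun k hk => hp k (List.mem_cons_of_mem k₀ hk))
    · intro k hk d
      rcases List.mem_cons.1 hk with rfl | hk'
      · show (if |((t k : I) : ℝ) - (t k : ℝ)| ≤ δt then H k (d, t k) else _) = H k (d, t k)
        rw [if_pos (by simp [abs_of_nonneg, le_of_lt hδt])]
      · have hfar' : ¬(|((t k : I) : ℝ) - (t k₀ : ℝ)| ≤ δt) := by
          have hkk₀ : k ≠ k₀ := fun h => hk₀l (h ▸ hk')
          have h3 := sep k k₀ hkk₀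
          intro hle
          linarith
        show (if |((t k : I) : ℝ) - (t k₀ : ℝ)| ≤ δt then H k₀ (d, t k) else
          stripGlue t δt H b l (d, t k)) = H k (d, t k)
        rw [if_neg hfar']
        exact ihlev k hk' d
    · intro p
      by_cases hc : |(p.2 : ℝ) - (t k₀ : ℝ)| ≤ δt
      · refine Or.inr ⟨k₀, hc, ?_⟩
        show (if |(p.2 : ℝ) - (t k₀ : ℝ)| ≤ δt then H k₀ p else stripGlue t δt H b l p) = H k₀ p
        rw [if_pos hc]
      · have hstep : stripGlue t δt H b (k₀ :: l) p = stripGlue t δt H b l p := by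
          show (if |(p.2 : ℝ) - (t k₀ : ℝ)| ≤ δt then H k₀ p else stripGlue t δt H b l p) = _
          rw [if_neg hc]
        rw [hstep]
        exact ihcase p

lemma buildGamma {n : ℕ} (t : Fin n → I) (δt ε3 : ℝ) (hδt : 0 < δt) (hε3 : 0 < ε3)
    (sep : ∀ k l : Fin n, k ≠ l → 3 * δt ≤ |(t k : ℝ) - (t l : ℝ)|)
    (φ : C(I × I, X))
    (hu : ∀ (d : I) (s s' : I), |(s : ℝ) - (s' : ℝ)| ≤ δt → dist (φ (d, s)) (φ (d, s')) < ε3)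
    (β : Fin n → C(I, X)) (h : Fin n → C(I × I, X))
    (hh0 : ∀ k d, h k (d, 0) = φ (d, t k))
    (hh1 : ∀ k d, h k (d, 1) = β k d)
    (hhd : ∀ k d s, dist (h k (d, s)) (φ (d, t k)) < ε3) :
    ∃ γ : C(I × I, X), (∀ p, dist (γ p) (φ p) ≤ 2 * ε3) ∧ ∀ k d, γ (d, t k) = β k d := by
  classical
  set sg : Fin n → I × I → I :=
    fun k p => Set.projIcc (0:ℝ) 1 zero_le_one (1 - 2 * |(p.2 : ℝ) - (t k : ℝ)| / δt) with hσdef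
  set tu : Fin n → I × I → I := fun k p => Set.projIcc (0:ℝ) 1 zero_le_one
    ((t k : ℝ) + 2 * ((p.2 : ℝ) -
      max ((t k : ℝ) - δt / 2) (min ((t k : ℝ) + δt / 2) (p.2 : ℝ)))) with hτdef
  set H : Fin n → I × I → X := fun k p =>
    if |(p.2 : ℝ) - (t k : ℝ)| ≤ δt / 2 then h k (p.1, sg k p) else φ (p.1, tu k p) with hHdef
  -- continuity
  have hHcont : ∀ k, Continuous (H k) := by
    intro k
    have hσc : Continuous (sg k) := by
      apply continuous_projIcc.comp
      fun_prop
    have hτc : Continuous (tu k) := by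
      apply continuous_projIcc.comp
      fun_prop
    apply Continuous.if_le
    · exact (h k).continuous.comp (continuous_fst.prodMk hσc)
    · exact φ.continuous.comp (continuous_fst.prodMk hτc)
    · fun_prop
    · exact continuous_const
    · -- agreement at |x - tk| = δt/2
      intro x hx
      have hσx : sg k x = 0 := by
        have harg : 1 - 2 * |(x.2 : ℝ) - (t k : ℝ)| / δt = 0 := by
          rw [hx]; field_simp; ring
        rw [hσdef]; dsimp only; rw [harg]
        exact Set.projIcc_left _
      have hclamp : max ((t k : ℝ) - δt / 2) (min ((t k : ℝ) + δt / 2) (x.2 : ℝ)) = (x.2 : ℝ) := by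
        obtain ⟨h1, h2⟩ := abs_le.1 (le_of_eq hx)
        rw [min_eq_right (by linarith), max_eq_right (by linarith)]
      have hτx : tu k x = t k := by
        rw [hτdef]; dsimp only; rw [hclamp]
        have : (t k : ℝ) + 2 * ((x.2 : ℝ) - (x.2 : ℝ)) = ((t k : I) : ℝ) := by ring
        rw [this, Set.projIcc_val]
      rw [hσx, hτx, hh0]
  -- boundary
  have hHb : ∀ (k : Fin n) (p : I × I), |(p.2 : ℝ) - (t k : ℝ)| = δt → H k p = φ p := by
    intro k p hp
    have hnot : ¬(|(p.2 : ℝ) - (t k : ℝ)| ≤ δt / 2) := by rw [hp]; intro hle; linarith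
    have hτp : tu k p = p.2 := by
      rcases abs_eq (le_of_lt hδt) |>.1 hp with hcase | hcase
      · have hmin : min ((t k : ℝ) + δt / 2) (p.2 : ℝ) = (t k : ℝ) + δt / 2 :=
          min_eq_left (by linarith)
        have hmax : max ((t k : ℝ) - δt / 2) ((t k : ℝ) + δt / 2) = (t k : ℝ) + δt / 2 :=
          max_eq_right (by linarith)
        rw [hτdef]; dsimp only; rw [hmin, hmax]
        have : (t k : ℝ) + 2 * ((p.2 : ℝ) - ((t k : ℝ) + δt / 2)) = ((p.2 : I) : ℝ) := by
          have : (p.2 : ℝ) = (t k : ℝ) + δt := by linarith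
          rw [this]; ring
        rw [this, Set.projIcc_val]
      · have hmin : min ((t k : ℝ) + δt / 2) (p.2 : ℝ) = (p.2 : ℝ) :=
          min_eq_right (by linarith)
        have hmax : max ((t k : ℝ) - δt / 2) (p.2 : ℝ) = (t k : ℝ) - δt / 2 :=
          max_eq_left (by linarith)
        rw [hτdef]; dsimp only; rw [hmin, hmax]
        have : (t k : ℝ) + 2 * ((p.2 : ℝ) - ((t k : ℝ) - δt / 2)) = ((p.2 : I) : ℝ) := by
          have : (p.2 : ℝ) = (t k : ℝ) - δt := by linarith
          rw [this]; ring
        rw [this, Set.projIcc_val]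
    rw [hHdef]; dsimp only; rw [if_neg hnot, hτp]
  -- value at the level
  have hHlev : ∀ (k : Fin n) (d : I), H k (d, t k) = β k d := by
    intro k d
    have hcond : |((t k : I) : ℝ) - (t k : ℝ)| ≤ δt / 2 := by simp; linarith
    have hσx : sg k (d, t k) = 1 := by
      have harg : 1 - 2 * |((t k : I) : ℝ) - (t k : ℝ)| / δt = 1 := by
        simp
      rw [hσdef]; dsimp only; rw [harg]
      exact Set.projIcc_right _
    rw [hHdef]; dsimp only; rw [if_pos hcond, hσx, hh1]
  -- distance estimate inside the strip
  have hHdist : ∀ (k : Fin n) (p : I × I), |(p.2 : ℝ) - (t k : ℝ)| ≤ δt →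
      dist (H k p) (φ p) ≤ 2 * ε3 := by
    intro k p hp
    rw [hHdef]; dsimp only
    by_cases hc : |(p.2 : ℝ) - (t k : ℝ)| ≤ δt / 2
    · rw [if_pos hc]
      have h1 : dist (h k (p.1, sg k p)) (φ (p.1, t k)) < ε3 := hhd k p.1 _
      have h2 : dist (φ (p.1, t k)) (φ (p.1, p.2)) < ε3 :=
        hu p.1 (t k) p.2 (by rw [abs_sub_comm]; exact hp)
      calc dist (h k (p.1, sg k p)) (φ p)
          ≤ dist (h k (p.1, sg k p)) (φ (p.1, t k)) + dist (φ (p.1, t k)) (φ p) :=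
            dist_triangle _ _ _
        _ = dist (h k (p.1, sg k p)) (φ (p.1, t k)) + dist (φ (p.1, t k)) (φ (p.1, p.2)) := by
            rw [Prod.mk.eta]
        _ ≤ ε3 + ε3 := add_le_add (le_of_lt h1) (le_of_lt h2)
        _ = 2 * ε3 := by ring
    · rw [if_neg hc]
      -- |tu k p - p.2| ≤ δt
      have hτclose : |((tu k p : I) : ℝ) - (p.2 : ℝ)| ≤ δt := by
        set c : ℝ := (t k : ℝ) with hcdef
        set x : ℝ := (p.2 : ℝ) with hxdef
        set arg : ℝ := c + 2 * (x - max (c - δt / 2) (min (c + δt / 2) x)) with hargdef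
        have hargx : |arg - x| ≤ δt := by
          push_neg at hc
          rcases le_total c x with hcx | hcx
          · have hxc1 : x - c ≤ δt := by
              have := abs_le.1 hp; exact this.2
            have hxc2 : δt / 2 < x - c := by
              rwa [abs_of_nonneg (by linarith)] at hc
            have hmin : min (c + δt / 2) x = c + δt / 2 := min_eq_left (by linarith)
            have hmax : max (c - δt / 2) (c + δt / 2) = c + δt / 2 := max_eq_right (by linarith)
            rw [hargdef, hmin, hmax]
            have : c + 2 * (x - (c + δt / 2)) - x = (x - c) - δt := by ring
            rw [this, abs_of_nonpos (by linarith)]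
            linarith
          · have hxc1 : c - x ≤ δt := by
              have := abs_le.1 hp
              have := this.1; linarith
            have hxc2 : δt / 2 < c - x := by
              rw [abs_of_nonpos (by linarith)] at hc; linarith
            have hmin : min (c + δt / 2) x = x := min_eq_right (by linarith)
            have hmax : max (c - δt / 2) x = c - δt / 2 := max_eq_left (by linarith)
            rw [hargdef, hmin, hmax]
            have : c + 2 * (x - (c - δt / 2)) - x = (x - c) + δt := by ring
            rw [this, abs_of_nonneg (by linarith)]
            linarith
        have hlip : |((tu k p : I) : ℝ) - x| ≤ |arg - x| := by
          have h1 := (LipschitzWith.projIcc (a := (0:ℝ)) (b := 1) zero_le_one).dist_le_mul arg x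
          have h2 : Set.projIcc (0:ℝ) 1 zero_le_one x = p.2 := Set.projIcc_val zero_le_one p.2
          rw [NNReal.coe_one, one_mul] at h1
          calc |((tu k p : I) : ℝ) - x|
              = dist (tu k p) (Set.projIcc (0:ℝ) 1 zero_le_one x) := by
                rw [h2, Subtype.dist_eq, Real.dist_eq]
            _ = dist (Set.projIcc (0:ℝ) 1 zero_le_one arg) (Set.projIcc (0:ℝ) 1 zero_le_one x) :=
                rfl
            _ ≤ dist arg x := h1
            _ = |arg - x| := Real.dist_eq _ _
        exact le_trans hlip hargx
      have h2 : dist (φ (p.1, tu k p)) (φ (p.1, p.2)) < ε3 := hu p.1 (tu k p) p.2 hτclose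
      calc dist (φ (p.1, tu k p)) (φ p) = dist (φ (p.1, tu k p)) (φ (p.1, p.2)) := by
            rw [Prod.mk.eta]
        _ ≤ ε3 := le_of_lt h2
        _ ≤ 2 * ε3 := by linarith
  -- glue
  obtain ⟨hc, hout, hlev, hcase⟩ := stripGlue_spec t δt hδt sep (fun p => φ p) φ.continuous
    H hHcont hHb (List.finRange n) (List.nodup_finRange n)
  refine ⟨⟨stripGlue t δt H (fun p => φ p) (List.finRange n), hc⟩, ?_, ?_⟩
  · intro p
    rcases hcase p with heq | ⟨k, hk, heq⟩
    · show dist (stripGlue t δt H (fun p => φ p) (List.finRange n) p) (φ p) ≤ 2 * ε3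
      rw [heq]
      simp [dist_self]
      positivity
    · show dist (stripGlue t δt H (fun p => φ p) (List.finRange n) p) (φ p) ≤ 2 * ε3
      rw [heq]
      exact hHdist k p hk
  · intro k d
    show stripGlue t δt H (fun p => φ p) (List.finRange n) (d, t k) = β k d
    rw [hlev k (List.mem_finRange k) d, hHlev]


lemma exists_sep {m : ℕ} (t : Fin (m + 1) → I) (ht : StrictMono t) (δu : ℝ) (hδu : 0 < δu) :
    ∃ δt > 0, δt < δu ∧ ∀ k l, k ≠ l → 3 * δt ≤ |(t k : ℝ) - (t l : ℝ)| := by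
  by_cases hs : (Finset.univ.offDiag : Finset (Fin (m + 1) × Fin (m + 1))).Nonempty
  · set c := Finset.univ.offDiag.inf' hs (fun q => |(t q.1 : ℝ) - (t q.2 : ℝ)|) with hcdef
    have hc : 0 < c := by
      rw [hcdef, Finset.lt_inf'_iff]
      intro q hq
      have hne : q.1 ≠ q.2 := (Finset.mem_offDiag.1 hq).2.2
      have hne' : (t q.1 : ℝ) ≠ (t q.2 : ℝ) := by
        intro hcontra
        exact hne (ht.injective (Subtype.ext hcontra))
      exact abs_pos.2 (sub_ne_zero.2 hne')
    refine ⟨min (δu / 2) (c / 3), by positivity,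
      lt_of_le_of_lt (min_le_left _ _) (by linarith), ?_⟩
    intro k l hkl
    have hmem : (k, l) ∈ Finset.univ.offDiag :=
      Finset.mem_offDiag.2 ⟨Finset.mem_univ _, Finset.mem_univ _, hkl⟩
    have h1 : c ≤ |(t k : ℝ) - (t l : ℝ)| := Finset.inf'_le _ hmem
    have h2 : min (δu / 2) (c / 3) ≤ c / 3 := min_le_right _ _
    linarith
  · refine ⟨δu / 2, by positivity, by linarith, fun k l hkl => ?_⟩
    have hmem : (k, l) ∈ (Finset.univ.offDiag : Finset (Fin (m + 1) × Fin (m + 1))) :=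
      Finset.mem_offDiag.2 ⟨Finset.mem_univ _, Finset.mem_univ _, hkl⟩
    exact absurd hmem (fun hmem => hs ⟨_, hmem⟩)


end DFLAux

open DFLAux in
/-- If `X` is a metric ANR with the Disjoint Arcs Property, then any two
level-preserving maps `f₁, f₂ : D × I → X × I` can be approximated, arbitrarily closely
in the sum metric on `X × I`, by level-preserving maps `g₁, g₂` whose level images
`g₁(D × {t k})` and `g₂(D × {t k})` are disjoint at each of finitely many prescribed
levels `t 0 < t 1 < ⋯ < t m` in `I`. -/
theorem disjoint_at_finitely_many_levels {X : Type u} [MetricSpace X]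
    (hANR : IsANR X) (hDAP : DAP X)
    (f₁ f₂ : C(I × I, X × I)) (h₁ : IsLevelPreserving f₁) (h₂ : IsLevelPreserving f₂)
    (m : ℕ) (t : Fin (m + 1) → I) (ht : StrictMono t) (ε : ℝ) (hε : 0 < ε) :
    ∃ g₁ g₂ : C(I × I, X × I),
      IsLevelPreserving g₁ ∧ IsLevelPreserving g₂ ∧
      (∀ p, sumDist (f₁ p) (g₁ p) < ε) ∧ (∀ p, sumDist (f₂ p) (g₂ p) < ε) ∧
      ∀ k, (Set.range fun d => g₁ (d, t k)) ∩ (Set.range fun d => g₂ (d, t k)) = ∅ := by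
  classical
  set φ₁ : C(I × I, X) := ⟨fun p => (f₁ p).1, continuous_fst.comp f₁.continuous⟩ with hφ₁def
  set φ₂ : C(I × I, X) := ⟨fun p => (f₂ p).1, continuous_fst.comp f₂.continuous⟩ with hφ₂def
  set x₀ : X := φ₁ (0, 0) with hx₀def
  set K : Set X := Set.range φ₁ ∪ Set.range φ₂ with hKdef
  have hK : IsCompact K :=
    (isCompact_range φ₁.continuous).union (isCompact_range φ₂.continuous)
  have hKne : K.Nonempty := ⟨x₀, Or.inl (Set.mem_range_self _)⟩
  obtain ⟨δ, hδpos, hδspec⟩ := key hANR x₀ K hK hKne (ε / 3) (by positivity)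
  -- uniform continuity in the second variable
  have huc : ∃ δu > 0, ∀ (i : Fin 2) (d : I) (s s' : I), |(s : ℝ) - (s' : ℝ)| < δu →
      dist ((if i = 0 then φ₁ else φ₂) (d, s)) ((if i = 0 then φ₁ else φ₂) (d, s')) < ε / 3 := by
    have hu1 := Metric.uniformContinuous_iff.1
      (CompactSpace.uniformContinuous_of_continuous φ₁.continuous) (ε / 3) (by positivity)
    have hu2 := Metric.uniformContinuous_iff.1
      (CompactSpace.uniformContinuous_of_continuous φ₂.continuous) (ε / 3) (by positivity)
    obtain ⟨δ1, hδ1, hδ1'⟩ := hu1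
    obtain ⟨δ2, hδ2, hδ2'⟩ := hu2
    refine ⟨min δ1 δ2, by positivity, ?_⟩
    intro i d s s' hss
    have hdist : dist ((d, s) : I × I) ((d, s') : I × I) = |(s : ℝ) - (s' : ℝ)| := by
      rw [Prod.dist_eq]
      have : dist d d = 0 := dist_self d
      rw [this, Subtype.dist_eq, Real.dist_eq]
      exact max_eq_right (abs_nonneg _)
    fin_cases i
    · simp only [if_pos rfl]
      exact hδ1' (by rw [hdist]; exact lt_of_lt_of_le hss (min_le_left _ _))
    · norm_num
      exact hδ2' (by rw [hdist]; exact lt_of_lt_of_le hss (min_le_right _ _))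
  obtain ⟨δu, hδu, huspec⟩ := huc
  have hu1 : ∀ (d : I) (s s' : I), |(s : ℝ) - (s' : ℝ)| < δu →
      dist (φ₁ (d, s)) (φ₁ (d, s')) < ε / 3 := by
    intro d s s' hss; simpa using huspec 0 d s s' hss
  have hu2 : ∀ (d : I) (s s' : I), |(s : ℝ) - (s' : ℝ)| < δu →
      dist (φ₂ (d, s)) (φ₂ (d, s')) < ε / 3 := by
    intro d s s' hss
    have := huspec 1 d s s' hss
    norm_num at this
    exact this
  obtain ⟨δt, hδt, hδtu, sep⟩ := exists_sep t ht δu hδu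
  -- level maps and DAP approximations
  have hlev : ∀ k : Fin (m + 1), ∃ (β₁ β₂ : C(I, X)) (h₁' h₂' : C(I × I, X)),
      (Set.range β₁ ∩ Set.range β₂ = ∅) ∧
      (∀ d, h₁' (d, 0) = φ₁ (d, t k)) ∧ (∀ d, h₁' (d, 1) = β₁ d) ∧
      (∀ d s, dist (h₁' (d, s)) (φ₁ (d, t k)) < ε / 3) ∧
      (∀ d, h₂' (d, 0) = φ₂ (d, t k)) ∧ (∀ d, h₂' (d, 1) = β₂ d) ∧
      (∀ d s, dist (h₂' (d, s)) (φ₂ (d, t k)) < ε / 3) := by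
    intro k
    set a₁ : C(I, X) := ⟨fun d => φ₁ (d, t k), φ₁.continuous.comp
      (continuous_id.prodMk continuous_const)⟩ with ha₁def
    set a₂ : C(I, X) := ⟨fun d => φ₂ (d, t k), φ₂.continuous.comp
      (continuous_id.prodMk continuous_const)⟩ with ha₂def
    obtain ⟨β₁, β₂, hb1, hb2, hdisj⟩ := hDAP a₁ a₂ δ hδpos
    obtain ⟨h₁', hh₁0, hh₁1, hh₁d⟩ := hδspec a₁ β₁
      (fun d => Or.inl (Set.mem_range_self _)) hb1
    obtain ⟨h₂', hh₂0, hh₂1, hh₂d⟩ := hδspec a₂ β₂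
      (fun d => Or.inr (Set.mem_range_self _)) hb2
    exact ⟨β₁, β₂, h₁', h₂', hdisj, hh₁0, hh₁1, hh₁d, hh₂0, hh₂1, hh₂d⟩
  choose β₁ β₂ hc₁ hc₂ hdisj hh₁0 hh₁1 hh₁d hh₂0 hh₂1 hh₂d using hlev
  -- build the approximating maps
  obtain ⟨γ₁, hγ₁dist, hγ₁lev⟩ := buildGamma t δt (ε / 3) hδt (by positivity) sep φ₁
    (fun d s s' hss => hu1 d s s' (lt_of_le_of_lt hss hδtu)) β₁ hc₁ hh₁0 hh₁1 hh₁d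
  obtain ⟨γ₂, hγ₂dist, hγ₂lev⟩ := buildGamma t δt (ε / 3) hδt (by positivity) sep φ₂
    (fun d s s' hss => hu2 d s s' (lt_of_le_of_lt hss hδtu)) β₂ hc₂ hh₂0 hh₂1 hh₂d
  refine ⟨⟨fun p => (γ₁ p, p.2), (γ₁.continuous).prodMk continuous_snd⟩,
    ⟨fun p => (γ₂ p, p.2), (γ₂.continuous).prodMk continuous_snd⟩,
    fun d s => rfl, fun d s => rfl, ?_, ?_, ?_⟩
  · intro p
    show dist (f₁ p).1 (γ₁ p) + dist (f₁ p).2 p.2 < ε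
    have he : (f₁ p).2 = p.2 := by
      have := h₁ p.1 p.2
      rwa [Prod.mk.eta] at this
    rw [he, dist_self, add_zero, dist_comm]
    calc dist (γ₁ p) ((f₁ p).1) = dist (γ₁ p) (φ₁ p) := rfl
      _ ≤ 2 * (ε / 3) := hγ₁dist p
      _ < ε := by linarith
  · intro p
    show dist (f₂ p).1 (γ₂ p) + dist (f₂ p).2 p.2 < ε
    have he : (f₂ p).2 = p.2 := by
      have := h₂ p.1 p.2
      rwa [Prod.mk.eta] at this
    rw [he, dist_self, add_zero, dist_comm]
    calc dist (γ₂ p) ((f₂ p).1) = dist (γ₂ p) (φ₂ p) := rfl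
      _ ≤ 2 * (ε / 3) := hγ₂dist p
      _ < ε := by linarith
  · intro k
    rw [Set.eq_empty_iff_forall_notMem]
    rintro x ⟨⟨d, hd⟩, ⟨d', hd'⟩⟩
    have e1 : x.1 = β₁ k d := by rw [← hd]; exact hγ₁lev k d
    have e2 : x.1 = β₂ k d' := by rw [← hd']; exact hγ₂lev k d'
    have : x.1 ∈ Set.range (β₁ k) ∩ Set.range (β₂ k) :=
      ⟨⟨d, e1.symm⟩, ⟨d', e2.symm⟩⟩
    rw [hdisj k] at this
    exact this
end
end
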